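/- arXiv:2101.04254 — 4 statements merged into one kernel-verified Lean document; each statement's English description precedes it below -/
import Mathlib

section
/- Let (X,ρ) be a quasimetric space (quasitriangle constant A₀ ≥ 1) with an upper doubling measure μ with dominating function λ and constant C_λ; set t := log₂ C_λ, let α > 0, γ := α/(2(α+t)), C_Q ≥ 1, C_K ≥ 1, 𝒞 := 2A₀C_QC_K, c > 0, A ≥ 0, C_h ≥ 0. Let K' : X × X → ℂ be measurable with |K'(x,y) − K'(x,w)| ≤ A ρ(y,w)^{α}/(ρ(x,w)^{α} λ(w,ρ(x,w))) whenever ρ(y,w) ≤ ρ(x,w)/C_K. Let Q ⊆ P ⊆ X be measurable sets, 0 < ℓ ≤ L, with ρ(y,w) ≤ C_Q ℓ for all y,w ∈ Q, and suppose R := ρ(Q, X∖P) satisfies R ≥ 𝒞 ℓ and R ≥ c ℓ^{1/2} L^{1/2}. Let h ∈ L²(μ) be supported in Q with ‖h‖_{L²(μ)} ≤ 1 and ∫ h dμ = 0, let m ∈ ℂ with |m| ≤ C_h μ(P)^{−1/2}, and assume the integrand below is absolutely integrable. Then |m| · |∫_{X∖P} ∫_{Q} K'(x,y) h(y) dμ(y)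 dμ(x)| ≤ C' · A · C_h · (ℓ/L)^{α/2} (μ(Q)/μ(P))^{1/2}, where C' depends only on C_λ, α, C_Q, C_K, A₀ and c. -/
open MeasureTheory
open scoped ENNReal

set_option maxHeartbeats 1000000 in
/-- the Adjacent/Nested matrix-element estimate
(Lemma 7.1 of the paper). -/
theorem adjacent_nested_estimate
    (Clam α C_Q C_K A₀ c : ℝ)
    (hClam : 1 ≤ Clam) (hα : 0 < α) (hC_Q : 1 ≤ C_Q) (hC_K : 1 ≤ C_K)
    (hA₀ : 1 ≤ A₀) (hc : 0 < c) :
    ∃ C' : ℝ, 0 < C' ∧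
      ∀ (X : Type) [MeasurableSpace X]
        (ρ : X → X → ℝ) (μ : Measure X) (lam : X → ℝ → ℝ)
        (K' : X → X → ℂ) (Q P : Set X) (ℓ L R A C_h : ℝ) (h : X → ℂ) (m : ℂ),
        (∀ x y, 0 ≤ ρ x y) → (∀ x y, ρ x y = 0 ↔ x = y) →
        (∀ x y, ρ x y = ρ y x) → (∀ x y z, ρ x z ≤ A₀ * (ρ x y + ρ y z)) →
        (∀ x r, 0 < r → 0 < lam x r) →
        (∀ x r s, 0 < r → r ≤ s → lam x r ≤ lam x s) →
        (∀ x r, 0 < r → lam x (2 * r) ≤ Clam * lam x r) →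
        (∀ x r, 0 < r → μ {y | ρ x y < r} ≤ ENNReal.ofReal (lam x r)) →
        0 ≤ A → 0 ≤ C_h →
        (∀ x y w, ρ y w ≤ ρ x w / C_K →
          ‖K' x y - K' x w‖ ≤ A * (ρ y w ^ α / (ρ x w ^ α * lam w (ρ x w)))) →
        MeasurableSet Q → MeasurableSet P → Q ⊆ P →
        0 < ℓ → ℓ ≤ L →
        (∀ y ∈ Q, ∀ w ∈ Q, ρ y w ≤ C_Q * ℓ) →
        (∀ y ∈ Q, ∀ x ∈ Pᶜ, R ≤ ρ y x) →
        2 * A₀ * C_Q * C_K * ℓ ≤ R →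
        c * ℓ ^ ((1 : ℝ) / 2) * L ^ ((1 : ℝ) / 2) ≤ R →
        Function.support h ⊆ Q → MemLp h 2 μ → eLpNorm h 2 μ ≤ 1 →
        (∫ y, h y ∂μ) = 0 →
        ‖m‖ ≤ C_h * (μ P).toReal ^ (-(1 / 2) : ℝ) →
        Integrable (fun p : X × X => K' p.1 p.2 * h p.2)
          ((μ.restrict Pᶜ).prod (μ.restrict Q)) →
        ‖m‖ * ‖∫ x in Pᶜ, (∫ y in Q, K' x y * h y ∂μ) ∂μ‖
          ≤ C' * A * C_h * (ℓ / L) ^ (α / 2)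
              * ((μ Q).toReal / (μ P).toReal) ^ ((1 : ℝ) / 2) := by
  have h2α1 : (2:ℝ) ^ (-α) < 1 :=
    Real.rpow_lt_one_of_one_lt_of_neg one_lt_two (neg_lt_zero.mpr hα)
  have h2α0 : (0:ℝ) < 2 ^ (-α) := Real.rpow_pos_of_pos two_pos _
  have hden : (0:ℝ) < 1 - 2 ^ (-α) := by linarith
  have hCQ0 : (0:ℝ) < C_Q := lt_of_lt_of_le one_pos hC_Q
  have hCK0 : (0:ℝ) < C_K := lt_of_lt_of_le one_pos hC_K
  have hA₀0 : (0:ℝ) < A₀ := lt_of_lt_of_le one_pos hA₀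
  set D : ℝ := Clam * (1 - 2 ^ (-α))⁻¹ with hDdef
  have hD0 : 0 < D := mul_pos (lt_of_lt_of_le one_pos hClam) (inv_pos.mpr hden)
  refine ⟨C_Q ^ α * c ^ (-α) * D,
    mul_pos (mul_pos (Real.rpow_pos_of_pos hCQ0 _) (Real.rpow_pos_of_pos hc _)) hD0, ?_⟩
  intro X _ ρ μ lam K' Q P ℓ L R A C_h h m hρ0 hρeq hρsymm hρtri hlam0 hlammono
    hlamdoub hμball hA hCh hK hQm hPm hQP hℓ hℓL hdiam hdist hR1 hR2 hsupp hmem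
    hnorm2 hint0 hm hprod
  have hL0 : 0 < L := lt_of_lt_of_le hℓ hℓL
  -- nonnegativity of the right hand side
  have hRHS0 : 0 ≤ C_Q ^ α * c ^ (-α) * D * A * C_h * (ℓ / L) ^ (α / 2)
      * ((μ Q).toReal / (μ P).toReal) ^ ((1:ℝ)/2) := by
    have h1 : (0:ℝ) ≤ C_Q ^ α * c ^ (-α) * D :=
      (mul_pos (mul_pos (Real.rpow_pos_of_pos hCQ0 _) (Real.rpow_pos_of_pos hc _)) hD0).le
    exact mul_nonneg (mul_nonneg (mul_nonneg (mul_nonneg h1 hA) hCh)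
      (Real.rpow_nonneg (div_nonneg hℓ.le hL0.le) _))
      (Real.rpow_nonneg (div_nonneg ENNReal.toReal_nonneg ENNReal.toReal_nonneg) _)
  -- trivial case : Q empty
  rcases Set.eq_empty_or_nonempty Q with hQe | ⟨w, hw⟩
  · have hh0 : h = 0 := Function.support_eq_empty_iff.mp
      (Set.subset_empty_iff.mp (hQe ▸ hsupp))
    simp only [hh0, Pi.zero_apply, mul_zero, integral_zero, norm_zero]
    simpa using hRHS0
  -- trivial case : μ P has zero or infinite mass
  rcases eq_or_lt_of_le (ENNReal.toReal_nonneg (a := μ P)) with hPt | hPt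
  · have hm0 : ‖m‖ = 0 := by
      have : C_h * (μ P).toReal ^ (-(1 / 2) : ℝ) = 0 := by
        rw [← hPt, Real.zero_rpow (by norm_num), mul_zero]
      exact le_antisymm (this ▸ hm) (norm_nonneg m)
    rw [hm0, zero_mul]
    exact hRHS0
  -- main case set-up
  have hR0 : 0 < R := lt_of_lt_of_le (by positivity) hR1
  have hμQ_lt : μ Q < ⊤ := by
    have hsub : Q ⊆ {y | ρ w y < 2 * (C_Q * ℓ)} := by
      intro y hy
      have h1 : ρ w y ≤ C_Q * ℓ := hdiam w hw y hy
      have h2 : 0 < C_Q * ℓ := mul_pos hCQ0 hℓ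
      simpa using lt_of_le_of_lt h1 (by linarith)
    exact lt_of_le_of_lt (le_trans (measure_mono hsub)
      (hμball w _ (by nlinarith))) ENNReal.ofReal_lt_top
  -- integrability of h on Q
  have hmemres : MemLp h 2 (μ.restrict Q) := hmem.restrict Q
  haveI : IsFiniteMeasure (μ.restrict Q) :=
    ⟨by rwa [Measure.restrict_apply_univ]⟩
  have hhint : Integrable h (μ.restrict Q) := hmemres.integrable one_le_two
  set IQ : ℝ := ∫ y in Q, ‖h y‖ ∂μ with hIQdef
  have hIQ0 : 0 ≤ IQ := integral_nonneg fun _ => norm_nonneg _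
  -- Cauchy-Schwarz : IQ ≤ μ(Q)^{1/2}
  have hIQ : IQ ≤ ((μ Q).toReal) ^ ((1:ℝ)/2) := by
    have h1 : ENNReal.ofReal IQ = eLpNorm h 1 (μ.restrict Q) := by
      rw [eLpNorm_one_eq_lintegral_enorm, ofReal_integral_norm_eq_lintegral_enorm hhint]
    have h2 := eLpNorm_le_eLpNorm_mul_rpow_measure_univ (p := 1) (q := 2)
      one_le_two hmemres.aestronglyMeasurable
    rw [Measure.restrict_apply_univ] at h2
    have h3 : eLpNorm h 2 (μ.restrict Q) ≤ 1 :=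
      le_trans (eLpNorm_mono_measure h Measure.restrict_le_self) hnorm2
    have hexp : 1/(1:ℝ≥0∞).toReal - 1/(2:ℝ≥0∞).toReal = ((1:ℝ)/2) := by norm_num
    have h4 : ENNReal.ofReal IQ ≤ (μ Q) ^ ((1:ℝ)/2) := by
      rw [h1]
      refine h2.trans ?_
      rw [hexp]
      calc eLpNorm h 2 (μ.restrict Q) * μ Q ^ ((1:ℝ)/2)
          ≤ 1 * μ Q ^ ((1:ℝ)/2) := by gcongr
        _ = μ Q ^ ((1:ℝ)/2) := one_mul _
    have h5 := ENNReal.toReal_mono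
      (ENNReal.rpow_ne_top_of_nonneg (by norm_num) hμQ_lt.ne) h4
    rwa [ENNReal.toReal_ofReal hIQ0, ← ENNReal.toReal_rpow] at h5
  -- the pointwise bound on Pᶜ
  set c₁ : ℝ := A * (C_Q * ℓ) ^ α * IQ with hc₁def
  have hc₁0 : 0 ≤ c₁ :=
    mul_nonneg (mul_nonneg hA (Real.rpow_nonneg (by positivity) _)) hIQ0
  set g : X → ℝ≥0∞ := fun x => ENNReal.ofReal ((ρ x w ^ α * lam w (ρ x w))⁻¹) with hgdef
  have hpt : ∀ x ∈ Pᶜ,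
      ENNReal.ofReal ‖∫ y in Q, K' x y * h y ∂μ‖ ≤ ENNReal.ofReal c₁ * g x := by
    intro x hx
    have hrR : R ≤ ρ x w := by rw [hρsymm]; exact hdist w hw x hx
    have hr0 : 0 < ρ x w := lt_of_lt_of_le hR0 hrR
    have hlamr : 0 < lam w (ρ x w) := hlam0 w _ hr0
    have hrα : 0 < ρ x w ^ α := Real.rpow_pos_of_pos hr0 α
    set Cx : ℝ := A * ((C_Q * ℓ) ^ α / (ρ x w ^ α * lam w (ρ x w))) with hCxdef
    have hCx0 : 0 ≤ Cx :=
      mul_nonneg hA (div_nonneg (Real.rpow_nonneg (by positivity) _)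
        (mul_pos hrα hlamr).le)
    have hker : ∀ y ∈ Q, ‖K' x y - K' x w‖ ≤ Cx := by
      intro y hy
      have hyw : ρ y w ≤ C_Q * ℓ := hdiam y hy w hw
      have happ : ρ y w ≤ ρ x w / C_K := by
        rw [le_div_iff₀ hCK0]
        nlinarith [hρ0 y w, mul_le_mul_of_nonneg_right hyw hCK0.le]
      refine (hK x y w happ).trans ?_
      have : ρ y w ^ α ≤ (C_Q * ℓ) ^ α :=
        Real.rpow_le_rpow (hρ0 y w) hyw hα.le
      rw [hCxdef]
      gcongr
    by_cases hintx : Integrable (fun y => K' x y * h y) (μ.restrict Q)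
    · have hzero : (∫ y in Q, h y ∂μ) = 0 := by
        rw [setIntegral_eq_integral_of_forall_compl_eq_zero
          (fun y hy => Function.notMem_support.mp fun hs => hy (hsupp hs))]
        exact hint0
      have hFx : (∫ y in Q, K' x y * h y ∂μ)
          = ∫ y in Q, (K' x y - K' x w) * h y ∂μ := by
        have heq : (∫ y in Q, (K' x y - K' x w) * h y ∂μ)
            = (∫ y in Q, K' x y * h y ∂μ) - ∫ y in Q, K' x w * h y ∂μ := by
          simp_rw [sub_mul]
          exact integral_sub hintx (hhint.const_mul _)
        rw [heq, integral_const_mul, hzero, mul_zero, sub_zero]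
      rw [hFx]
      have hb : ‖∫ y in Q, (K' x y - K' x w) * h y ∂μ‖ ≤ Cx * IQ := by
        refine (norm_integral_le_integral_norm _).trans ?_
        have hmono : (∫ y in Q, ‖(K' x y - K' x w) * h y‖ ∂μ)
            ≤ ∫ y in Q, Cx * ‖h y‖ ∂μ := by
          refine integral_mono_of_nonneg
            (Filter.Eventually.of_forall fun y => norm_nonneg _)
            (hhint.norm.const_mul Cx)
            (Filter.Eventually.of_forall fun y => ?_)
          show ‖(K' x y - K' x w) * h y‖ ≤ Cx * ‖h y‖
          by_cases hy : y ∈ Q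
          · rw [norm_mul]
            exact mul_le_mul_of_nonneg_right (hker y hy) (norm_nonneg _)
          · have hh : h y = 0 := Function.notMem_support.mp fun hs => hy (hsupp hs)
            simp [hh]
        refine hmono.trans ?_
        rw [integral_const_mul]
      refine le_trans (ENNReal.ofReal_le_ofReal hb) (le_of_eq ?_)
      show ENNReal.ofReal (Cx * IQ)
          = ENNReal.ofReal c₁ * ENNReal.ofReal ((ρ x w ^ α * lam w (ρ x w))⁻¹)
      rw [← ENNReal.ofReal_mul hc₁0]
      congr 1
      rw [hCxdef, hc₁def]
      field_simp
    · rw [integral_undef hintx]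
      simp only [norm_zero, ENNReal.ofReal_zero]
      exact zero_le
  -- the dyadic annuli estimate
  have houter : (∫⁻ x in Pᶜ, g x ∂μ) ≤ ENNReal.ofReal (D * R ^ (-α)) := by
    set T : ℕ → Set X := fun k => toMeasurable μ {x | ρ w x < 2 ^ (k+1) * R} with hTdef
    set u : ℕ → ℝ≥0∞ :=
      fun k => ENNReal.ofReal (((2 ^ k * R) ^ α * lam w (2 ^ k * R))⁻¹) with hudef
    have hptg : ∀ x ∈ Pᶜ, g x ≤ ∑' k, (T k).indicator (fun _ => u k) x := by
      intro x hx
      have hrR : R ≤ ρ x w := by rw [hρsymm]; exact hdist w hw x hx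
      have hr0 : 0 < ρ x w := lt_of_lt_of_le hR0 hrR
      have ht1 : 1 ≤ ρ x w / R := (one_le_div hR0).mpr hrR
      have ht0 : 0 < ρ x w / R := lt_of_lt_of_le one_pos ht1
      have hlogb0 : 0 ≤ Real.logb 2 (ρ x w / R) := Real.logb_nonneg one_lt_two ht1
      obtain ⟨k, hk1, hk2⟩ : ∃ k : ℕ,
          (2:ℝ) ^ k ≤ ρ x w / R ∧ ρ x w / R < 2 ^ (k+1) := by
        refine ⟨⌊Real.logb 2 (ρ x w / R)⌋₊, ?_, ?_⟩
        · rw [← Real.rpow_natCast 2 ⌊Real.logb 2 (ρ x w / R)⌋₊]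
          calc (2:ℝ) ^ ((⌊Real.logb 2 (ρ x w / R)⌋₊ : ℕ) : ℝ)
              ≤ 2 ^ Real.logb 2 (ρ x w / R) :=
                Real.rpow_le_rpow_of_exponent_le one_le_two (Nat.floor_le hlogb0)
            _ = ρ x w / R := Real.rpow_logb two_pos (by norm_num) ht0
        · have hlt : Real.logb 2 (ρ x w / R)
              < (⌊Real.logb 2 (ρ x w / R)⌋₊ : ℝ) + 1 := Nat.lt_floor_add_one _
          calc ρ x w / R = 2 ^ Real.logb 2 (ρ x w / R) :=
                (Real.rpow_logb two_pos (by norm_num) ht0).symm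
            _ < 2 ^ ((⌊Real.logb 2 (ρ x w / R)⌋₊ : ℝ) + 1) :=
                Real.rpow_lt_rpow_of_exponent_lt one_lt_two hlt
            _ = (2:ℝ) ^ (⌊Real.logb 2 (ρ x w / R)⌋₊ + 1) := by
                rw [← Real.rpow_natCast 2 (⌊Real.logb 2 (ρ x w / R)⌋₊ + 1)]
                congr 1
                push_cast
                ring
      have hlow : (2:ℝ) ^ k * R ≤ ρ x w := by
        have h' := mul_le_mul_of_nonneg_right hk1 hR0.le
        rwa [div_mul_cancel₀ _ hR0.ne'] at h'
      have hhigh : ρ x w < (2:ℝ) ^ (k+1) * R := by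
        have h' := mul_lt_mul_of_pos_right hk2 hR0
        rwa [div_mul_cancel₀ _ hR0.ne'] at h'
      have hxT : x ∈ T k := by
        refine subset_toMeasurable μ _ ?_
        simp only [Set.mem_setOf_eq]
        rw [hρsymm]; exact hhigh
      have hbk0 : (0:ℝ) < 2 ^ k * R := by positivity
      have hgu : g x ≤ u k := by
        show ENNReal.ofReal ((ρ x w ^ α * lam w (ρ x w))⁻¹)
            ≤ ENNReal.ofReal (((2 ^ k * R) ^ α * lam w (2 ^ k * R))⁻¹)
        refine ENNReal.ofReal_le_ofReal ?_
        refine inv_anti₀ (mul_pos (Real.rpow_pos_of_pos hbk0 _) (hlam0 w _ hbk0)) ?_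
        refine mul_le_mul ?_ (hlammono w _ _ hbk0 hlow) (hlam0 w _ hbk0).le
          (Real.rpow_nonneg hr0.le _)
        exact Real.rpow_le_rpow hbk0.le hlow hα.le
      calc g x ≤ u k := hgu
        _ = (T k).indicator (fun _ => u k) x := (Set.indicator_of_mem hxT (fun _ => u k)).symm
        _ ≤ ∑' j, (T j).indicator (fun _ => u j) x :=
            ENNReal.le_tsum k
    have hterm : ∀ k : ℕ, u k * μ (T k)
        ≤ ENNReal.ofReal (Clam * R ^ (-α)) * (ENNReal.ofReal (2 ^ (-α))) ^ k := by
      intro k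
      have hbk0 : (0:ℝ) < 2 ^ k * R := by positivity
      have hlampos : 0 < lam w (2 ^ k * R) := hlam0 w _ hbk0
      have hμT : μ (T k) ≤ ENNReal.ofReal (Clam * lam w (2 ^ k * R)) := by
        rw [hTdef]
        simp only [measure_toMeasurable]
        refine le_trans (hμball w _ (by positivity)) (ENNReal.ofReal_le_ofReal ?_)
        have h2k : (2:ℝ) ^ (k+1) * R = 2 * (2 ^ k * R) := by ring
        rw [h2k]
        exact hlamdoub w _ hbk0
      calc u k * μ (T k)
          ≤ ENNReal.ofReal (((2 ^ k * R) ^ α * lam w (2 ^ k * R))⁻¹)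
            * ENNReal.ofReal (Clam * lam w (2 ^ k * R)) := mul_le_mul' le_rfl hμT
        _ = ENNReal.ofReal ((((2 ^ k * R) ^ α * lam w (2 ^ k * R))⁻¹)
              * (Clam * lam w (2 ^ k * R))) := (ENNReal.ofReal_mul (by positivity)).symm
        _ = ENNReal.ofReal (Clam * R ^ (-α) * ((2:ℝ) ^ (-α)) ^ k) := by
            congr 1
            have hk1 : ((2:ℝ) ^ (-α)) ^ k = (((2:ℝ) ^ k) ^ α)⁻¹ := by
              rw [← Real.rpow_natCast ((2:ℝ) ^ (-α)) k, ← Real.rpow_natCast (2:ℝ) k,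
                ← Real.rpow_mul (by norm_num : (0:ℝ) ≤ 2),
                ← Real.rpow_mul (by norm_num : (0:ℝ) ≤ 2),
                ← Real.rpow_neg (by norm_num : (0:ℝ) ≤ 2)]
              congr 1
              ring
            rw [Real.mul_rpow (by positivity : (0:ℝ) ≤ (2:ℝ) ^ k) hR0.le, hk1,
              Real.rpow_neg hR0.le]
            have h2kα : (0:ℝ) < ((2:ℝ) ^ k) ^ α :=
              Real.rpow_pos_of_pos (by positivity) _
            have hRα : (0:ℝ) < R ^ α := Real.rpow_pos_of_pos hR0 _
            field_simp
        _ = ENNReal.ofReal (Clam * R ^ (-α)) * (ENNReal.ofReal (2 ^ (-α))) ^ k := by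
            rw [ENNReal.ofReal_mul (by positivity), ENNReal.ofReal_pow h2α0.le]
    calc (∫⁻ x in Pᶜ, g x ∂μ)
        ≤ ∫⁻ x in Pᶜ, (∑' k, (T k).indicator (fun _ => u k) x) ∂μ :=
          setLIntegral_mono' hPm.compl hptg
      _ ≤ ∫⁻ x, (∑' k, (T k).indicator (fun _ => u k) x) ∂μ :=
          setLIntegral_le_lintegral _ _
      _ = ∑' k, ∫⁻ x, (T k).indicator (fun _ => u k) x ∂μ :=
          lintegral_tsum fun k =>
            (measurable_const.indicator (measurableSet_toMeasurable _ _)).aemeasurable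
      _ = ∑' k, u k * μ (T k) := by
          refine tsum_congr fun k => ?_
          rw [lintegral_indicator_const (measurableSet_toMeasurable _ _)]
      _ ≤ ∑' k, ENNReal.ofReal (Clam * R ^ (-α)) * (ENNReal.ofReal (2 ^ (-α))) ^ k :=
          ENNReal.tsum_le_tsum hterm
      _ = ENNReal.ofReal (Clam * R ^ (-α)) * (1 - ENNReal.ofReal (2 ^ (-α)))⁻¹ := by
          rw [ENNReal.tsum_mul_left, ENNReal.tsum_geometric]
      _ = ENNReal.ofReal (D * R ^ (-α)) := by
          rw [← ENNReal.ofReal_one, ← ENNReal.ofReal_sub _ h2α0.le,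
            ← ENNReal.ofReal_inv_of_pos hden, ← ENNReal.ofReal_mul (by positivity)]
          congr 1
          rw [hDdef]; ring
  -- norm of the outer integral
  have hnormI : ‖∫ x in Pᶜ, (∫ y in Q, K' x y * h y ∂μ) ∂μ‖ ≤ c₁ * (D * R ^ (-α)) := by
    have hRα0 : 0 ≤ D * R ^ (-α) := mul_nonneg hD0.le (Real.rpow_nonneg hR0.le _)
    calc ‖∫ x in Pᶜ, (∫ y in Q, K' x y * h y ∂μ) ∂μ‖
        ≤ (∫⁻ x in Pᶜ, ENNReal.ofReal ‖∫ y in Q, K' x y * h y ∂μ‖ ∂μ).toReal :=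
          norm_integral_le_lintegral_norm _
      _ ≤ (ENNReal.ofReal c₁ * ENNReal.ofReal (D * R ^ (-α))).toReal := by
          refine ENNReal.toReal_mono (ENNReal.mul_ne_top ENNReal.ofReal_ne_top ENNReal.ofReal_ne_top) ?_
          calc (∫⁻ x in Pᶜ, ENNReal.ofReal ‖∫ y in Q, K' x y * h y ∂μ‖ ∂μ)
              ≤ ∫⁻ x in Pᶜ, ENNReal.ofReal c₁ * g x ∂μ :=
                setLIntegral_mono' hPm.compl hpt
            _ = ENNReal.ofReal c₁ * ∫⁻ x in Pᶜ, g x ∂μ :=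
                lintegral_const_mul' _ _ ENNReal.ofReal_ne_top
            _ ≤ ENNReal.ofReal c₁ * ENNReal.ofReal (D * R ^ (-α)) := by gcongr
      _ = c₁ * (D * R ^ (-α)) := by
          rw [← ENNReal.ofReal_mul hc₁0, ENNReal.toReal_ofReal (mul_nonneg hc₁0 hRα0)]
  -- assembling
  have hcl0 : (0:ℝ) < c * ℓ ^ ((1:ℝ)/2) * L ^ ((1:ℝ)/2) := by positivity
  have hRinv : R ^ (-α) ≤ (c * ℓ ^ ((1:ℝ)/2) * L ^ ((1:ℝ)/2)) ^ (-α) :=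
    Real.rpow_le_rpow_of_nonpos hcl0 hR2 (by linarith)
  have hB1 : (0:ℝ) ≤ C_h * (μ P).toReal ^ (-(1 / 2) : ℝ) :=
    mul_nonneg hCh (Real.rpow_nonneg ENNReal.toReal_nonneg _)
  have hmain : ‖m‖ * ‖∫ x in Pᶜ, (∫ y in Q, K' x y * h y ∂μ) ∂μ‖
      ≤ (C_h * (μ P).toReal ^ (-(1 / 2) : ℝ))
        * ((A * (C_Q * ℓ) ^ α * ((μ Q).toReal) ^ ((1:ℝ)/2))
          * (D * (c * ℓ ^ ((1:ℝ)/2) * L ^ ((1:ℝ)/2)) ^ (-α))) := by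
    refine le_trans (mul_le_mul hm hnormI (norm_nonneg _) hB1) ?_
    refine mul_le_mul_of_nonneg_left ?_ hB1
    rw [hc₁def]
    have hB2a : (0:ℝ) ≤ A * (C_Q * ℓ) ^ α :=
      mul_nonneg hA (Real.rpow_nonneg (by positivity) _)
    refine mul_le_mul (mul_le_mul_of_nonneg_left hIQ hB2a)
      (mul_le_mul_of_nonneg_left hRinv hD0.le)
      (mul_nonneg hD0.le (Real.rpow_nonneg hR0.le _))
      (mul_nonneg hB2a (Real.rpow_nonneg ENNReal.toReal_nonneg _))
  refine hmain.trans (le_of_eq ?_)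
  -- final algebra
  have e1 : (C_Q * ℓ) ^ α = C_Q ^ α * ℓ ^ α := Real.mul_rpow hCQ0.le hℓ.le
  have e2 : (c * ℓ ^ ((1:ℝ)/2) * L ^ ((1:ℝ)/2)) ^ (-α)
      = c ^ (-α) * ℓ ^ (-(α/2)) * L ^ (-(α/2)) := by
    rw [Real.mul_rpow (by positivity) (by positivity),
      Real.mul_rpow hc.le (by positivity),
      ← Real.rpow_mul hℓ.le, ← Real.rpow_mul hL0.le,
      show (1:ℝ)/2 * -α = -(α/2) from by ring]
  have e3 : (ℓ / L) ^ (α/2) = ℓ ^ (α/2) * (L ^ (α/2))⁻¹ := by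
    rw [Real.div_rpow hℓ.le hL0.le, div_eq_mul_inv]
  have e4 : ((μ Q).toReal / (μ P).toReal) ^ ((1:ℝ)/2)
      = (μ Q).toReal ^ ((1:ℝ)/2) * ((μ P).toReal ^ ((1:ℝ)/2))⁻¹ := by
    rw [Real.div_rpow ENNReal.toReal_nonneg ENNReal.toReal_nonneg, div_eq_mul_inv]
  have e5 : ℓ ^ α * ℓ ^ (-(α/2)) = ℓ ^ (α/2) := by
    rw [← Real.rpow_add hℓ]; congr 1; ring
  have e6 : L ^ (-(α/2)) = (L ^ (α/2))⁻¹ := Real.rpow_neg hL0.le _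
  have e7 : (μ P).toReal ^ (-(1 / 2) : ℝ) = ((μ P).toReal ^ ((1:ℝ)/2))⁻¹ := by
    rw [← Real.rpow_neg ENNReal.toReal_nonneg]
  rw [e1, e2, e3, e4, ← e5, e6, e7]
  ring
end

section
/- Let (X, 𝔅) be a measurable space with a σ-finite measure μ, let H be a complex Hilbert space, and let j : X → H be strongly measurable. Say that μ is a Carleson measure for the Hilbert function space determined by j if there exists C ≥ 0 such that ∫_X |⟨f, j(x)⟩_H|² dμ(x) ≤ C² ‖f‖²_H for all f ∈ H. Then μ is a Carleson measure if and only if there exists C' ≥ 0 such that for every real-valued g ∈ L²(μ) with ∫_X |g(x)| ‖j(x)‖_H dμ(x) < ∞ one has |∬_{X×X} Re⟨j(x), j(z)⟩_H · g(x) g(z) dμ(x) dμ(z)| ≤ C' ‖g‖²_{L²(μ)}. Moreover the constants can be taken comparable: one may take C' = C², and conversely C² ≤ 2C'. -/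
open MeasureTheory
open scoped ENNReal NNReal

section helpers
set_option linter.unusedSectionVars false

variable {X : Type*} [MeasurableSpace X] {μ : Measure X}

lemma integral_norm_sq_eq {E : Type*} [NormedAddCommGroup E] {w : X → E}
    (hw : AEStronglyMeasurable w μ) :
    ∫ x, ‖w x‖ ^ 2 ∂μ = (∫⁻ x, (‖w x‖₊ : ℝ≥0∞) ^ 2 ∂μ).toReal := by
  rw [integral_eq_lintegral_of_nonneg_ae (Filter.Eventually.of_forall fun x => sq_nonneg _)
    ((hw.norm.aemeasurable.pow_const 2).aestronglyMeasurable)]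
  congr 1
  refine lintegral_congr fun x => ?_
  rw [ENNReal.ofReal_pow (norm_nonneg _), ofReal_norm, enorm_eq_nnnorm]

lemma eLpNorm_two_pow_two {E : Type*} [NormedAddCommGroup E] (w : X → E) :
    (eLpNorm w 2 μ) ^ 2 = ∫⁻ x, (‖w x‖₊ : ℝ≥0∞) ^ 2 ∂μ := by
  rw [eLpNorm_eq_lintegral_rpow_enorm_toReal two_ne_zero ENNReal.ofNat_ne_top]
  rw [ENNReal.toReal_ofNat, ← ENNReal.rpow_natCast _ 2, ← ENNReal.rpow_mul]
  norm_num
  simp only [enorm_eq_nnnorm]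

lemma toReal_eLpNorm_two_sq {E : Type*} [NormedAddCommGroup E] {w : X → E}
    (hw : AEStronglyMeasurable w μ) :
    ((eLpNorm w 2 μ).toReal) ^ 2 = ∫ x, ‖w x‖ ^ 2 ∂μ := by
  rw [integral_norm_sq_eq hw, ← eLpNorm_two_pow_two, ENNReal.toReal_pow]

lemma toReal_eLpNorm_two_sq_real {g : X → ℝ} (hg : AEStronglyMeasurable g μ) :
    ((eLpNorm g 2 μ).toReal) ^ 2 = ∫ x, g x ^ 2 ∂μ := by
  rw [toReal_eLpNorm_two_sq hg]
  simp [Real.norm_eq_abs, sq_abs]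


variable {X : Type*} [MeasurableSpace X] {μ : Measure X}
  {H : Type*} [NormedAddCommGroup H] [InnerProductSpace ℂ H] [CompleteSpace H]

lemma smul_integrable {j : X → H} (hj : StronglyMeasurable j) {g : X → ℝ}
    (hg : AEStronglyMeasurable g μ) (hgi : Integrable (fun x => |g x| * ‖j x‖) μ) :
    Integrable (fun x => g x • j x) μ := by
  refine hgi.mono' (hg.smul hj.aestronglyMeasurable) ?_
  refine Filter.Eventually.of_forall fun x => ?_
  rw [norm_smul, Real.norm_eq_abs]

lemma re_inner_integral {j : X → H} (hj : StronglyMeasurable j) {g : X → ℝ}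
    (hg : AEStronglyMeasurable g μ) (hgi : Integrable (fun x => |g x| * ‖j x‖) μ) (f : H) :
    ∫ x, g x * (inner ℂ f (j x) : ℂ).re ∂μ = (inner ℂ f (∫ x, g x • j x ∂μ) : ℂ).re := by
  have hInt := smul_integrable hj hg hgi
  rw [← integral_inner (𝕜 := ℂ) hInt f]
  have hpt : ∀ x, (inner ℂ f (g x • j x) : ℂ) = (g x : ℂ) * (inner ℂ f (j x) : ℂ) := by
    intro x
    rw [RCLike.real_smul_eq_coe_smul (K := ℂ), inner_smul_right]
    norm_cast
  have hIc : Integrable (fun x => (inner ℂ f (g x • j x) : ℂ)) μ := by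
    refine (hgi.const_mul ‖f‖).mono'
      ((aestronglyMeasurable_const.inner (hg.smul hj.aestronglyMeasurable))) ?_
    refine Filter.Eventually.of_forall fun x => ?_
    calc ‖(inner ℂ f (g x • j x) : ℂ)‖ ≤ ‖f‖ * ‖g x • j x‖ := norm_inner_le_norm _ _
      _ = ‖f‖ * (|g x| * ‖j x‖) := by rw [norm_smul, Real.norm_eq_abs]
  simp only [← RCLike.re_to_complex]
  rw [← integral_re hIc]
  refine integral_congr_ae (Filter.Eventually.of_forall fun x => ?_)
  simp [RCLike.re_to_complex, hpt x, Complex.mul_re]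


lemma double_integral_eq {j : X → H} (hj : StronglyMeasurable j) {g : X → ℝ}
    (hg : AEStronglyMeasurable g μ) (hgi : Integrable (fun x => |g x| * ‖j x‖) μ) :
    ∫ x, (∫ z, (inner ℂ (j x) (j z) : ℂ).re * g x * g z ∂μ) ∂μ
      = ‖∫ x, g x • j x ∂μ‖ ^ 2 := by
  set v := ∫ x, g x • j x ∂μ with hv
  have hx : ∀ x : X, ∫ z, (inner ℂ (j x) (j z) : ℂ).re * g x * g z ∂μ
      = g x * (inner ℂ (j x) v : ℂ).re := by
    intro x
    have h1 : ∀ z : X, (inner ℂ (j x) (j z) : ℂ).re * g x * g z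
        = g x * (g z * (inner ℂ (j x) (j z) : ℂ).re) := fun z => by ring
    simp_rw [h1]
    rw [integral_const_mul, re_inner_integral hj hg hgi (j x)]
  rw [integral_congr_ae (Filter.Eventually.of_forall hx)]
  have h2 : ∀ x : X, g x * (inner ℂ (j x) v : ℂ).re = g x * (inner ℂ v (j x) : ℂ).re := by
    intro x
    congr 1
    simp only [← RCLike.re_to_complex]
    exact inner_re_symm _ _
  rw [integral_congr_ae (Filter.Eventually.of_forall h2),
    re_inner_integral hj hg hgi v, ← hv]
  simp only [← RCLike.re_to_complex]
  exact inner_self_eq_norm_sq v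


lemma dir1 {j : X → H} (hj : StronglyMeasurable j) (C : ℝ) (hC : 0 ≤ C)
    (hbd : ∀ f : H, ∫⁻ x, (‖(inner ℂ f (j x) : ℂ)‖₊ : ℝ≥0∞) ^ 2 ∂μ
      ≤ ENNReal.ofReal (C ^ 2 * ‖f‖ ^ 2))
    (g : X → ℝ) (hg2 : MemLp g 2 μ) (hgi : Integrable (fun x => |g x| * ‖j x‖) μ) :
    |∫ x, (∫ z, (inner ℂ (j x) (j z) : ℂ).re * g x * g z ∂μ) ∂μ|
      ≤ C ^ 2 * ((eLpNorm g 2 μ).toReal) ^ 2 := by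
  have hg := hg2.aestronglyMeasurable
  set v := ∫ x, g x • j x ∂μ with hv
  rw [double_integral_eq hj hg hgi, ← hv, abs_of_nonneg (sq_nonneg _)]
  set N := (eLpNorm g 2 μ).toReal with hNdef
  have hN : 0 ≤ N := ENNReal.toReal_nonneg
  set w := fun x => (inner ℂ v (j x) : ℂ) with hw
  have hwm : AEStronglyMeasurable w μ :=
    AEStronglyMeasurable.inner aestronglyMeasurable_const hj.aestronglyMeasurable
  have hL := hbd v
  have hfin : ∫⁻ x, (‖w x‖₊ : ℝ≥0∞) ^ 2 ∂μ < ∞ := lt_of_le_of_lt hL ENNReal.ofReal_lt_top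
  have hw2 : MemLp w 2 μ := by
    refine ⟨hwm, ?_⟩
    have h := eLpNorm_two_pow_two (μ := μ) w
    refine lt_top_iff_ne_top.mpr fun htop => ?_
    rw [htop] at h
    rw [ENNReal.top_pow (by norm_num)] at h
    exact hfin.ne h.symm
  have hIw : ∫ x, ‖w x‖ ^ 2 ∂μ ≤ C ^ 2 * ‖v‖ ^ 2 := by
    rw [integral_norm_sq_eq hwm]
    exact ENNReal.toReal_le_of_le_ofReal (by positivity) hL
  have h3 : ∫ x, g x * (w x).re ∂μ = ‖v‖ ^ 2 := by
    rw [re_inner_integral hj hg hgi v, ← hv]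
    simp only [← RCLike.re_to_complex]
    exact inner_self_eq_norm_sq v
  have hInt2 : Integrable (fun x => |g x| * ‖w x‖) μ := by
    refine (hgi.const_mul ‖v‖).mono'
      ((hg.norm.mul hwm.norm).congr (Filter.Eventually.of_forall fun x => by
        simp [Real.norm_eq_abs])) (Filter.Eventually.of_forall fun x => ?_)
    rw [Real.norm_eq_abs, abs_of_nonneg (by positivity)]
    calc |g x| * ‖w x‖ ≤ |g x| * (‖v‖ * ‖j x‖) :=
          mul_le_mul_of_nonneg_left (norm_inner_le_norm _ _) (abs_nonneg _)
      _ = ‖v‖ * (|g x| * ‖j x‖) := by ring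
  have hInt1 : Integrable (fun x => g x * (w x).re) μ := by
    refine hInt2.mono' ((hg.mul ((Complex.continuous_re.comp_aestronglyMeasurable hwm))))
      (Filter.Eventually.of_forall fun x => ?_)
    rw [Real.norm_eq_abs, abs_mul]
    refine mul_le_mul_of_nonneg_left ?_ (abs_nonneg _)
    exact Complex.abs_re_le_norm (w x)
  have hmono : ∫ x, g x * (w x).re ∂μ ≤ ∫ x, |g x| * ‖w x‖ ∂μ := by
    refine integral_mono hInt1 hInt2 fun x => ?_
    calc g x * (w x).re ≤ |g x * (w x).re| := le_abs_self _
      _ = |g x| * |(w x).re| := abs_mul _ _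
      _ ≤ |g x| * ‖w x‖ := mul_le_mul_of_nonneg_left
          (Complex.abs_re_le_norm (w x))
          (abs_nonneg _)
  set gc := fun x => ((g x : ℂ)) with hgc
  have hpq : Real.HolderConjugate 2 2 := Real.HolderConjugate.two_two
  have hof : (ENNReal.ofReal (2:ℝ)) = (2 : ℝ≥0∞) := by norm_num
  have hHolder : ∫ x, ‖gc x‖ * ‖w x‖ ∂μ ≤
      (∫ x, ‖gc x‖ ^ (2:ℝ) ∂μ) ^ (1/(2:ℝ)) * (∫ x, ‖w x‖ ^ (2:ℝ) ∂μ) ^ (1/(2:ℝ)) := by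
    refine integral_mul_norm_le_Lp_mul_Lq hpq ?_ ?_
    · rw [hof]; exact hg2.ofReal
    · rwa [hof]
  have hrg : ∫ x, ‖gc x‖ ^ (2:ℝ) ∂μ = N ^ 2 := by
    rw [hNdef, toReal_eLpNorm_two_sq_real hg]
    refine integral_congr_ae (Filter.Eventually.of_forall fun x => ?_)
    simp [hgc, Real.rpow_two, Complex.norm_real, Real.norm_eq_abs, sq_abs]
  have hrw : ∫ x, ‖w x‖ ^ (2:ℝ) ∂μ = ∫ x, ‖w x‖ ^ 2 ∂μ := by
    refine integral_congr_ae (Filter.Eventually.of_forall fun x => ?_)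
    simp [Real.rpow_two]
  have habs : ∫ x, |g x| * ‖w x‖ ∂μ = ∫ x, ‖gc x‖ * ‖w x‖ ∂μ := by
    refine integral_congr_ae (Filter.Eventually.of_forall fun x => ?_)
    simp [hgc, Complex.norm_real, Real.norm_eq_abs]
  have hsq1 : (N ^ 2 : ℝ) ^ (1/(2:ℝ)) = N := by
    rw [← Real.sqrt_eq_rpow, Real.sqrt_sq hN]
  have hsq2 : (∫ x, ‖w x‖ ^ 2 ∂μ) ^ (1/(2:ℝ)) ≤ C * ‖v‖ := by
    rw [← Real.sqrt_eq_rpow]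
    calc Real.sqrt (∫ x, ‖w x‖ ^ 2 ∂μ) ≤ Real.sqrt (C ^ 2 * ‖v‖ ^ 2) :=
        Real.sqrt_le_sqrt hIw
      _ = C * ‖v‖ := by
        rw [show C ^ 2 * ‖v‖ ^ 2 = (C * ‖v‖) ^ 2 by ring, Real.sqrt_sq (by positivity)]
  have hkey : ‖v‖ ^ 2 ≤ N * (C * ‖v‖) := by
    calc ‖v‖ ^ 2 = ∫ x, g x * (w x).re ∂μ := h3.symm
      _ ≤ ∫ x, |g x| * ‖w x‖ ∂μ := hmono
      _ = ∫ x, ‖gc x‖ * ‖w x‖ ∂μ := habs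
      _ ≤ (∫ x, ‖gc x‖ ^ (2:ℝ) ∂μ) ^ (1/(2:ℝ)) * (∫ x, ‖w x‖ ^ (2:ℝ) ∂μ) ^ (1/(2:ℝ)) := hHolder
      _ = (N ^ 2 : ℝ) ^ (1/(2:ℝ)) * (∫ x, ‖w x‖ ^ 2 ∂μ) ^ (1/(2:ℝ)) := by rw [hrg, hrw]
      _ ≤ N * (C * ‖v‖) := by
          rw [hsq1]
          exact mul_le_mul_of_nonneg_left hsq2 hN
  nlinarith [norm_nonneg v, sq_nonneg (‖v‖ - C * N)]


lemma dir2 [SigmaFinite μ] {j : X → H} (hj : StronglyMeasurable j) (C' : ℝ) (hC' : 0 ≤ C')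
    (hbd : ∀ g : X → ℝ, MemLp g 2 μ → Integrable (fun x => |g x| * ‖j x‖) μ →
      |∫ x, (∫ z, (inner ℂ (j x) (j z) : ℂ).re * g x * g z ∂μ) ∂μ|
        ≤ C' * ((eLpNorm g 2 μ).toReal) ^ 2)
    (f : H) :
    ∫⁻ x, (‖(inner ℂ f (j x) : ℂ)‖₊ : ℝ≥0∞) ^ 2 ∂μ ≤ ENNReal.ofReal (2 * C' * ‖f‖ ^ 2) := by
  set A : ℕ → Set X := fun n => spanningSets μ n ∩ {x | ‖j x‖ ≤ n} with hA
  have hjn : Measurable fun x => ‖j x‖ := hj.norm.measurable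
  have hAm : ∀ n, MeasurableSet (A n) := fun n =>
    (measurableSet_spanningSets μ n).inter (measurableSet_le hjn measurable_const)
  have hAmono : Monotone A := fun n m hnm =>
    Set.inter_subset_inter (monotone_spanningSets μ hnm)
      (fun x hx => le_trans hx ((Nat.cast_le (α := ℝ)).mpr hnm))
  have hAfin : ∀ n, μ (A n) < ∞ := fun n =>
    lt_of_le_of_lt (measure_mono Set.inter_subset_left) (measure_spanningSets_lt_top μ n)
  -- key estimate for the quadratic form of truncations
  have key : ∀ (f : H) (n : ℕ),
      ∫ x in A n, (inner ℂ f (j x) : ℂ).re ^ 2 ∂μ ≤ C' * ‖f‖ ^ 2 := by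
    intro f n
    set φ := fun x => (inner ℂ f (j x) : ℂ).re with hφ
    set gn := Set.indicator (A n) φ with hgn
    have hφm : StronglyMeasurable φ := Complex.continuous_re.comp_stronglyMeasurable
        ((innerSL ℂ f).continuous.comp_stronglyMeasurable hj)
    have hgnm : StronglyMeasurable gn := hφm.indicator (hAm n)
    have hφbound : ∀ x ∈ A n, |φ x| ≤ ‖f‖ * n := by
      intro x hx
      calc |φ x| ≤ ‖(inner ℂ f (j x) : ℂ)‖ := by
            exact Complex.abs_re_le_norm _
        _ ≤ ‖f‖ * ‖j x‖ := norm_inner_le_norm _ _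
        _ ≤ ‖f‖ * n := mul_le_mul_of_nonneg_left hx.2 (norm_nonneg f)
    have hconst : ∀ c : ℝ, Integrable (Set.indicator (A n) (fun _ => c)) μ := by
      intro c
      rw [integrable_indicator_iff (hAm n)]
      exact integrableOn_const (hAfin n).ne
    have hgn2 : MemLp gn 2 μ := by
      rw [memLp_two_iff_integrable_sq hgnm.aestronglyMeasurable]
      refine (hconst ((‖f‖ * n) ^ 2)).mono'
        ((hgnm.measurable.pow_const 2).aestronglyMeasurable)
        (Filter.Eventually.of_forall fun x => ?_)
      by_cases hx : x ∈ A n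
      · rw [Set.indicator_of_mem hx, hgn, Set.indicator_of_mem hx, Real.norm_eq_abs, abs_pow]
        exact pow_le_pow_left₀ (abs_nonneg _) (hφbound x hx) 2
      · simp [Set.indicator_of_notMem hx, hgn]
    have hgni : Integrable (fun x => |gn x| * ‖j x‖) μ := by
      refine (hconst (‖f‖ * n * n)).mono'
        ((hgnm.measurable.norm.mul hjn).aestronglyMeasurable.congr
          (Filter.Eventually.of_forall fun x => by simp [Real.norm_eq_abs]))
        (Filter.Eventually.of_forall fun x => ?_)
      by_cases hx : x ∈ A n
      · rw [Real.norm_eq_abs, abs_of_nonneg (by positivity), hgn, Set.indicator_of_mem hx,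
          Set.indicator_of_mem hx]
        calc |φ x| * ‖j x‖ ≤ (‖f‖ * n) * n :=
          mul_le_mul (hφbound x hx) hx.2 (norm_nonneg _) (by positivity)
        _ = ‖f‖ * n * n := rfl
      · simp [Set.indicator_of_notMem hx, hgn]
    have hgna : AEStronglyMeasurable gn μ := hgnm.aestronglyMeasurable
    have hDI := hbd gn hgn2 hgni
    rw [double_integral_eq hj hgna hgni] at hDI
    set vn := ∫ x, gn x • j x ∂μ with hvn
    have hE : ((eLpNorm gn 2 μ).toReal) ^ 2 = ∫ x, gn x ^ 2 ∂μ :=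
      toReal_eLpNorm_two_sq_real hgna
    set E := ∫ x, gn x ^ 2 ∂μ with hEdef
    have hEnn : 0 ≤ E := integral_nonneg fun x => sq_nonneg _
    have h1 : ‖vn‖ ^ 2 ≤ C' * E := by
      rw [abs_of_nonneg (sq_nonneg _)] at hDI
      rw [hE] at hDI
      exact hDI
    have h2 : E = (inner ℂ f vn : ℂ).re := by
      rw [← re_inner_integral hj hgna hgni f, hEdef]
      refine integral_congr_ae (Filter.Eventually.of_forall fun x => ?_)
      by_cases hx : x ∈ A n
      · simp only [hgn, Set.indicator_of_mem hx]; ring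
      · simp [hgn, Set.indicator_of_notMem hx]
    have h3 : (inner ℂ f vn : ℂ).re ≤ ‖f‖ * ‖vn‖ := by
      simp only [← RCLike.re_to_complex]
      exact re_inner_le_norm (𝕜 := ℂ) f vn
    have h4 : E ≤ ‖f‖ * ‖vn‖ := h2.trans_le h3
    have hEgoal : ∫ x in A n, φ x ^ 2 ∂μ = E := by
      rw [hEdef, ← integral_indicator (hAm n)]
      refine integral_congr_ae (Filter.Eventually.of_forall fun x => ?_)
      by_cases hx : x ∈ A n
      · simp [hgn, Set.indicator_of_mem hx]
      · simp [hgn, Set.indicator_of_notMem hx]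
    rw [hEgoal]
    rcases eq_or_lt_of_le hEnn with h | h
    · rw [← h]; positivity
    · nlinarith [h1, h4, norm_nonneg f, norm_nonneg vn]
  -- measurability of the quadratic integrand
  have hwm : StronglyMeasurable fun x => (inner ℂ f (j x) : ℂ) :=
    (innerSL ℂ f).continuous.comp_stronglyMeasurable hj
  have hFm : Measurable fun x => ((‖(inner ℂ f (j x) : ℂ)‖₊ : ℝ≥0∞)) ^ 2 :=
    (hwm.measurable.nnnorm.coe_nnreal_ennreal).pow_const 2
  set F := fun x => ((‖(inner ℂ f (j x) : ℂ)‖₊ : ℝ≥0∞)) ^ 2 with hF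
  have hmono2 : Monotone fun n => Set.indicator (A n) F := fun n m h =>
    Set.indicator_le_indicator_of_subset (hAmono h) (fun x => zero_le)
  have hsup : ∀ x, ⨆ n, Set.indicator (A n) F x = F x := by
    intro x
    obtain ⟨n1, hn1⟩ : ∃ n, x ∈ spanningSets μ n := by
      have hx : x ∈ ⋃ n, spanningSets μ n := by rw [iUnion_spanningSets]; trivial
      exact Set.mem_iUnion.mp hx
    have hmem : x ∈ A (max n1 ⌈‖j x‖⌉₊) := by
      constructor
      · exact monotone_spanningSets μ (le_max_left _ _) hn1
      · show ‖j x‖ ≤ ((max n1 ⌈‖j x‖⌉₊ : ℕ) : ℝ)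
        calc ‖j x‖ ≤ (⌈‖j x‖⌉₊ : ℝ) := Nat.le_ceil _
          _ ≤ _ := Nat.cast_le.mpr (le_max_right _ _)
    refine le_antisymm (iSup_le fun n => Set.indicator_le_self _ _ x) ?_
    refine le_iSup_of_le (max n1 ⌈‖j x‖⌉₊) ?_
    rw [Set.indicator_of_mem hmem]
  have hlim : ∫⁻ x, F x ∂μ = ⨆ n, ∫⁻ x, Set.indicator (A n) F x ∂μ := by
    rw [← lintegral_iSup (fun n => hFm.indicator (hAm n)) hmono2]
    exact lintegral_congr fun x => (hsup x).symm
  have hgoal : ∫⁻ x, (‖(inner ℂ f (j x) : ℂ)‖₊ : ℝ≥0∞) ^ 2 ∂μ = ∫⁻ x, F x ∂μ := rfl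
  rw [hgoal, hlim]
  refine iSup_le fun n => ?_
  rw [lintegral_indicator (hAm n)]
  -- per-level bound
  have hwb : ∀ x ∈ A n, ‖(inner ℂ f (j x) : ℂ)‖ ≤ ‖f‖ * n := fun x hx =>
    (norm_inner_le_norm _ _).trans (mul_le_mul_of_nonneg_left hx.2 (norm_nonneg f))
  have hfin2 : ∫⁻ x in A n, F x ∂μ ≠ ∞ := by
    have hb : ∫⁻ x in A n, F x ∂μ ≤ ∫⁻ _ in A n, ENNReal.ofReal ((‖f‖ * n) ^ 2) ∂μ := by
      refine lintegral_mono_ae ((ae_restrict_iff' (hAm n)).mpr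
        (Filter.Eventually.of_forall fun x hx => ?_))
      rw [hF]
      show ((‖(inner ℂ f (j x) : ℂ)‖₊ : ℝ≥0∞)) ^ 2 ≤ _
      rw [← enorm_eq_nnnorm, ← ofReal_norm, ← ENNReal.ofReal_pow (norm_nonneg _)]
      exact ENNReal.ofReal_le_ofReal (pow_le_pow_left₀ (norm_nonneg _) (hwb x hx) 2)
    refine (hb.trans_lt ?_).ne
    rw [setLIntegral_const]
    exact ENNReal.mul_lt_top ENNReal.ofReal_lt_top (hAfin n)
  have hreal : ∫⁻ x in A n, F x ∂μ
      = ENNReal.ofReal (∫ x in A n, ‖(inner ℂ f (j x) : ℂ)‖ ^ 2 ∂μ) := by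
    rw [integral_norm_sq_eq (μ := μ.restrict (A n)) hwm.aestronglyMeasurable,
      ENNReal.ofReal_toReal hfin2]
  rw [hreal]
  refine ENNReal.ofReal_le_ofReal ?_
  -- split into real and imaginary parts
  have intconst : ∀ c : ℝ, IntegrableOn (fun _ => c) (A n) μ := fun c =>
    integrableOn_const (hAfin n).ne
  have int1 : IntegrableOn (fun x => (inner ℂ f (j x) : ℂ).re ^ 2) (A n) μ := by
    refine (intconst ((‖f‖ * n) ^ 2)).mono'
      (((Complex.continuous_re.comp_stronglyMeasurable hwm).measurable.pow_const
        2).aestronglyMeasurable.restrict)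
      (((ae_restrict_iff' (hAm n)).mpr (Filter.Eventually.of_forall fun x hx => ?_)))
    rw [Real.norm_eq_abs, abs_pow]
    exact pow_le_pow_left₀ (abs_nonneg _)
      (le_trans (by exact Complex.abs_re_le_norm _) (hwb x hx)) 2
  have int2 : IntegrableOn (fun x => (inner ℂ f (j x) : ℂ).im ^ 2) (A n) μ := by
    refine (intconst ((‖f‖ * n) ^ 2)).mono'
      (((Complex.continuous_im.comp_stronglyMeasurable hwm).measurable.pow_const
        2).aestronglyMeasurable.restrict)
      (((ae_restrict_iff' (hAm n)).mpr (Filter.Eventually.of_forall fun x hx => ?_)))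
    rw [Real.norm_eq_abs, abs_pow]
    exact pow_le_pow_left₀ (abs_nonneg _)
      (le_trans (by exact Complex.abs_im_le_norm _) (hwb x hx)) 2
  have hsplit : ∫ x in A n, ‖(inner ℂ f (j x) : ℂ)‖ ^ 2 ∂μ
      = ∫ x in A n, (inner ℂ f (j x) : ℂ).re ^ 2 ∂μ
        + ∫ x in A n, (inner ℂ f (j x) : ℂ).im ^ 2 ∂μ := by
    rw [← integral_add int1 int2]
    refine integral_congr_ae (Filter.Eventually.of_forall fun x => ?_)
    simp only [Complex.sq_norm, Complex.normSq_apply]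
    ring
  have him : ∫ x in A n, (inner ℂ f (j x) : ℂ).im ^ 2 ∂μ ≤ C' * ‖f‖ ^ 2 := by
    have hkey := key (Complex.I • f) n
    have heq : ∀ x, (inner ℂ (Complex.I • f) (j x) : ℂ).re = (inner ℂ f (j x) : ℂ).im := by
      intro x
      rw [inner_smul_left]
      simp [Complex.mul_re]
    have hnorm : ‖Complex.I • f‖ = ‖f‖ := by
      rw [norm_smul, Complex.norm_I, one_mul]
    calc ∫ x in A n, (inner ℂ f (j x) : ℂ).im ^ 2 ∂μ
        = ∫ x in A n, (inner ℂ (Complex.I • f) (j x) : ℂ).re ^ 2 ∂μ :=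
          integral_congr_ae (Filter.Eventually.of_forall fun x => by simp only [heq])
      _ ≤ C' * ‖Complex.I • f‖ ^ 2 := hkey
      _ = C' * ‖f‖ ^ 2 := by rw [hnorm]
  rw [hsplit]
  have hre := key f n
  linarith


end helpers

/-- a measure is Carleson for a reproducing kernel Hilbert space
if and only if the quadratic form of the real part of the kernel is bounded on
L²(μ), with comparable constants (Proposition 9.1 of the paper). -/
theorem carleson_iff_bilinear_bound
    {X : Type*} [MeasurableSpace X] (μ : Measure X) [SigmaFinite μ]
    {H : Type*} [NormedAddCommGroup H] [InnerProductSpace ℂ H] [CompleteSpace H]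
    (j : X → H) (hj : StronglyMeasurable j) :
    (∀ C : ℝ, 0 ≤ C →
      (∀ f : H, ∫⁻ x, (‖(inner ℂ f (j x) : ℂ)‖₊ : ℝ≥0∞) ^ 2 ∂μ
          ≤ ENNReal.ofReal (C ^ 2 * ‖f‖ ^ 2)) →
      ∀ g : X → ℝ, MemLp g 2 μ →
        Integrable (fun x => |g x| * ‖j x‖) μ →
        |∫ x, (∫ z, (inner ℂ (j x) (j z) : ℂ).re * g x * g z ∂μ) ∂μ|
          ≤ C ^ 2 * ((eLpNorm g 2 μ).toReal) ^ 2) ∧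
    (∀ C' : ℝ, 0 ≤ C' →
      (∀ g : X → ℝ, MemLp g 2 μ →
        Integrable (fun x => |g x| * ‖j x‖) μ →
        |∫ x, (∫ z, (inner ℂ (j x) (j z) : ℂ).re * g x * g z ∂μ) ∂μ|
          ≤ C' * ((eLpNorm g 2 μ).toReal) ^ 2) →
      ∀ f : H, ∫⁻ x, (‖(inner ℂ f (j x) : ℂ)‖₊ : ℝ≥0∞) ^ 2 ∂μ
          ≤ ENNReal.ofReal (2 * C' * ‖f‖ ^ 2)) := by
  constructor
  · intro C hC hbd g hg2 hgi
    exact dir1 hj C hC hbd g hg2 hgi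
  · intro C' hC' hbd f
    exact dir2 hj C' hC' hbd f
end

section
/- Let (X,ρ) be a quasimetric space with an upper doubling measure μ with dominating function λ and constant C_λ (t := log₂ C_λ), and assume λ is symmetric: there is C₀ ≥ 1 with λ(x,r) ≤ C₀ λ(y,r) whenever ρ(x,y) ≤ r. Let α > 0, γ := α/(2(α+t)), C_Q ≥ 1, c > 0. Let 0 < ℓ ≤ L, let w, z' ∈ X with ρ(z',w) ≤ C_Q L, and let Q', S ⊆ X be measurable sets with Q' ⊆ B(z', C_Q L) and μ(S) ≤ μ(B(z', C_Q L)). Suppose ρ(x,w) ≥ c ℓ^{γ} L^{1−γ} for every x ∈ Q'. Then for every h ∈ L²(μ) with ‖h‖_{L²(μ)} ≤ 1, ∫_{Q'} ℓ^{α} ρ(x,w)^{−α} λ(w, ρ(x,w))^{−1} |h(x)| dμ(x) ≤ C' (ℓ/L)^{α/2} μ(S)^{−1/2}, where C' depends only on C_λ, C₀, C_Q, α and c. -/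
open MeasureTheory

lemma rpow_logb_comm' {x y : ℝ} (hx : 0 < x) (hy : 0 < y) :
    x ^ Real.logb 2 y = y ^ Real.logb 2 x := by
  rw [Real.rpow_def_of_pos hx, Real.rpow_def_of_pos hy, Real.logb, Real.logb]
  ring_nf

lemma doubling_iter' {lam : ℝ → ℝ} {Clam : ℝ} (hClam : 1 ≤ Clam)
    (hdbl : ∀ r, 0 < r → lam (2 * r) ≤ Clam * lam r) :
    ∀ n : ℕ, ∀ r : ℝ, 0 < r → lam (2 ^ n * r) ≤ Clam ^ n * lam r := by
  intro n
  induction n with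
  | zero => intro r hr; simp
  | succ n ih =>
    intro r hr
    have h1 : (2:ℝ) ^ (n+1) * r = 2 ^ n * (2 * r) := by ring
    have h2 := ih (2 * r) (by linarith)
    calc lam (2 ^ (n+1) * r) = lam (2 ^ n * (2 * r)) := by rw [h1]
      _ ≤ Clam ^ n * lam (2 * r) := h2
      _ ≤ Clam ^ n * (Clam * lam r) := by
          have := hdbl r hr
          have hCn : (0:ℝ) ≤ Clam ^ n := pow_nonneg (by linarith) n
          nlinarith
      _ = Clam ^ (n+1) * lam r := by ring

lemma doubling_rpow' {lam : ℝ → ℝ} {Clam : ℝ} (hClam : 1 ≤ Clam)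
    (hpos : ∀ r, 0 < r → 0 < lam r)
    (hmono : ∀ r s, 0 < r → r ≤ s → lam r ≤ lam s)
    (hdbl : ∀ r, 0 < r → lam (2 * r) ≤ Clam * lam r)
    {r R : ℝ} (hr : 0 < r) (hrR : r ≤ R) :
    lam R ≤ Clam * (R / r) ^ (Real.logb 2 Clam) * lam r := by
  have hClam0 : (0:ℝ) < Clam := by linarith
  have hR : 0 < R := lt_of_lt_of_le hr hrR
  have hrat1 : 1 ≤ R / r := (one_le_div hr).2 hrR
  have hrat0 : 0 < R / r := by linarith
  have hlb0 : 0 ≤ Real.logb 2 (R / r) := Real.logb_nonneg one_lt_two hrat1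
  set n : ℕ := ⌈Real.logb 2 (R / r)⌉₊ with hn
  have hle : Real.logb 2 (R / r) ≤ (n : ℝ) := Nat.le_ceil _
  have hRle : R ≤ 2 ^ n * r := by
    have h2 : (R / r) = (2:ℝ) ^ (Real.logb 2 (R/r)) :=
      (Real.rpow_logb two_pos (by norm_num) hrat0).symm
    have h3 : (2:ℝ) ^ (Real.logb 2 (R/r)) ≤ (2:ℝ) ^ ((n:ℝ)) :=
      Real.rpow_le_rpow_of_exponent_le one_le_two hle
    have h4 : ((2:ℝ) ^ ((n:ℝ))) = (2:ℝ) ^ n := by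
      rw [Real.rpow_natCast]
    have : R / r ≤ (2:ℝ) ^ n := by rw [h2]; rw [h4] at h3; exact h3
    calc R = (R / r) * r := by field_simp
      _ ≤ (2:ℝ) ^ n * r := by nlinarith
  have h5 : lam R ≤ lam (2 ^ n * r) := hmono R _ hR hRle
  have h6 : lam (2 ^ n * r) ≤ Clam ^ n * lam r := doubling_iter' hClam hdbl n r hr
  have h7 : (Clam : ℝ) ^ n ≤ Clam * (R / r) ^ (Real.logb 2 Clam) := by
    have hceil : (n : ℝ) ≤ Real.logb 2 (R / r) + 1 := by
      have := Nat.ceil_lt_add_one hlb0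
      linarith
    calc (Clam : ℝ) ^ n = Clam ^ ((n : ℝ)) := (Real.rpow_natCast _ _).symm
      _ ≤ Clam ^ (Real.logb 2 (R / r) + 1) :=
          Real.rpow_le_rpow_of_exponent_le hClam hceil
      _ = Clam ^ (Real.logb 2 (R / r)) * Clam := by
          rw [Real.rpow_add hClam0, Real.rpow_one]
      _ = Clam * (R / r) ^ (Real.logb 2 Clam) := by
          rw [rpow_logb_comm' hClam0 hrat0]; ring
  have hlr : 0 < lam r := hpos r hr
  calc lam R ≤ Clam ^ n * lam r := le_trans h5 h6
    _ ≤ (Clam * (R / r) ^ (Real.logb 2 Clam)) * lam r := by nlinarith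

lemma key_rpow_algebra {α γ t c ℓ L : ℝ} (hc : 0 < c) (hℓ : 0 < ℓ) (hL : 0 < L)
    (hγ : γ * (α + t) = α / 2) :
    ℓ ^ α * (c * ℓ ^ γ * L ^ (1-γ)) ^ (-α) * (L/ℓ) ^ (γ*t)
      = c ^ (-α) * (ℓ/L) ^ (α/2) := by
  have hℓγ : (0:ℝ) < ℓ ^ γ := Real.rpow_pos_of_pos hℓ _
  have hL1γ : (0:ℝ) < L ^ (1-γ) := Real.rpow_pos_of_pos hL _
  rw [Real.mul_rpow (by positivity) hL1γ.le, Real.mul_rpow hc.le hℓγ.le,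
    ← Real.rpow_mul hℓ.le, ← Real.rpow_mul hL.le,
    Real.div_rpow hL.le hℓ.le, Real.div_rpow hℓ.le hL.le]
  have e1 : ℓ ^ α * (c ^ (-α) * ℓ ^ (γ * -α) * L ^ ((1-γ) * -α)) * (L ^ (γ*t) / ℓ ^ (γ*t))
      = c ^ (-α) * ((ℓ ^ α * ℓ ^ (γ * -α) / ℓ ^ (γ*t)) * (L ^ ((1-γ) * -α) * L ^ (γ*t))) := by
    ring
  rw [e1]
  congr 1
  have eℓ : ℓ ^ α * ℓ ^ (γ * -α) / ℓ ^ (γ*t) = ℓ ^ (α + γ * -α - γ*t) := by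
    rw [Real.rpow_sub hℓ, Real.rpow_add hℓ]
  have eL : L ^ ((1-γ) * -α) * L ^ (γ*t) = L ^ ((1-γ) * -α + γ*t) := by
    rw [Real.rpow_add hL]
  rw [eℓ, eL]
  have h1 : α + γ * -α - γ*t = α/2 := by nlinarith [hγ]
  have h2 : (1-γ) * -α + γ*t = -(α/2) := by nlinarith [hγ]
  rw [h1, h2, Real.rpow_neg hL.le]
  ring

set_option maxHeartbeats 1000000 in
/-- the integral estimate (eq5:SepIn_b) used in the second
Separated/Nested lemma of the paper. -/
theorem sibling_child_integral_estimate
    (Clam C₀ C_Q α c : ℝ)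
    (hClam : 1 ≤ Clam) (hC₀ : 1 ≤ C₀) (hC_Q : 1 ≤ C_Q) (hα : 0 < α) (hc : 0 < c) :
    ∃ C' : ℝ, 0 < C' ∧
      ∀ (X : Type) [MeasurableSpace X]
        (ρ : X → X → ℝ) (A₀ : ℝ) (μ : Measure X) (lam : X → ℝ → ℝ)
        (ℓ L : ℝ) (w z' : X) (Q' S : Set X) (h : X → ℂ),
        1 ≤ A₀ →
        (∀ a b, 0 ≤ ρ a b) → (∀ a b, ρ a b = 0 ↔ a = b) →
        (∀ a b, ρ a b = ρ b a) → (∀ a b e, ρ a e ≤ A₀ * (ρ a b + ρ b e)) →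
        (∀ a r, 0 < r → 0 < lam a r) →
        (∀ a r s, 0 < r → r ≤ s → lam a r ≤ lam a s) →
        (∀ a r, 0 < r → lam a (2 * r) ≤ Clam * lam a r) →
        (∀ a r, 0 < r → μ {b | ρ a b < r} ≤ ENNReal.ofReal (lam a r)) →
        (∀ a b r, ρ a b ≤ r → lam a r ≤ C₀ * lam b r) →
        (Measurable fun x => ρ x w) →
        (Measurable fun x => lam w (ρ x w)) →
        MeasurableSet Q' →
        0 < ℓ → ℓ ≤ L →
        ρ z' w ≤ C_Q * L →
        Q' ⊆ {b | ρ z' b < C_Q * L} →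
        μ S ≤ μ {b | ρ z' b < C_Q * L} →
        (∀ x ∈ Q',
          c * ℓ ^ (α / (2 * (α + Real.logb 2 Clam)))
              * L ^ (1 - α / (2 * (α + Real.logb 2 Clam))) ≤ ρ x w) →
        MemLp h 2 μ → eLpNorm h 2 μ ≤ 1 →
        (∫⁻ x in Q', ENNReal.ofReal (ℓ ^ α * ρ x w ^ (-α) * (lam w (ρ x w))⁻¹ * ‖h x‖) ∂μ)
          ≤ ENNReal.ofReal (C' * (ℓ / L) ^ (α / 2)) * μ S ^ (-(1 / 2) : ℝ) := by
  set t := Real.logb 2 Clam with ht_def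
  have ht : 0 ≤ t := Real.logb_nonneg one_lt_two hClam
  set M : ℝ := max (C_Q / c) 1 with hM_def
  have hM1 : 1 ≤ M := le_max_right _ _
  have hM0 : 0 < M := by linarith
  refine ⟨C₀ * Clam * M ^ t * c ^ (-α), by positivity, ?_⟩
  intro X _ ρ A₀ μ lam ℓ L w z' Q' S h hA₀ hρ0 hρeq hρsymm hρtri hlampos hlammono
    hlamdbl hμlam hlamsym hmeasρ hmeasl hQ'meas hℓ hℓL hz'w hQ'B hμS hxw hmem hnorm
  have hL : 0 < L := lt_of_lt_of_le hℓ hℓL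
  set γ : ℝ := α / (2 * (α + t)) with hγ_def
  have hαt : 0 < α + t := by linarith
  have hγαt : γ * (α + t) = α / 2 := by
    rw [hγ_def]; field_simp
  have hγ0 : 0 < γ := by positivity
  set r₀ : ℝ := c * ℓ ^ γ * L ^ (1-γ) with hr₀_def
  have hr₀ : 0 < r₀ := by positivity
  have hCQL : 0 < C_Q * L := by positivity
  have hlamw : 0 < lam w r₀ := hlampos w r₀ hr₀
  set K : ℝ := ℓ ^ α * r₀ ^ (-α) * (lam w r₀)⁻¹ with hK_def
  have hK0 : 0 ≤ K := by positivity
  set B : Set X := {b | ρ z' b < C_Q * L} with hB_def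
  -- Step 1: pointwise bound on Q'
  have hpt : ∀ x ∈ Q',
      ℓ ^ α * ρ x w ^ (-α) * (lam w (ρ x w))⁻¹ * ‖h x‖ ≤ K * ‖h x‖ := by
    intro x hx
    have hr : r₀ ≤ ρ x w := hxw x hx
    have hρx : 0 < ρ x w := lt_of_lt_of_le hr₀ hr
    have h1 : ρ x w ^ (-α) ≤ r₀ ^ (-α) := by
      rw [Real.rpow_neg hρx.le, Real.rpow_neg hr₀.le]
      exact inv_anti₀ (Real.rpow_pos_of_pos hr₀ _)
        (Real.rpow_le_rpow hr₀.le hr hα.le)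
    have h2 : (lam w (ρ x w))⁻¹ ≤ (lam w r₀)⁻¹ :=
      inv_anti₀ hlamw (hlammono w r₀ (ρ x w) hr₀ hr)
    have hn : (0:ℝ) ≤ ‖h x‖ := norm_nonneg _
    rw [hK_def]
    have hl2 : 0 ≤ (lam w (ρ x w))⁻¹ :=
      (inv_pos.2 (hlampos w _ hρx)).le
    have hstep : ℓ ^ α * ρ x w ^ (-α) * (lam w (ρ x w))⁻¹ ≤ ℓ ^ α * r₀ ^ (-α) * (lam w r₀)⁻¹ :=
      mul_le_mul (mul_le_mul_of_nonneg_left h1 (by positivity)) h2 hl2 (by positivity)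
    exact mul_le_mul_of_nonneg_right hstep hn
  -- Step 2: the integral is at most ofReal K * ∫ ‖h‖
  have hstep2 : (∫⁻ x in Q', ENNReal.ofReal (ℓ ^ α * ρ x w ^ (-α) * (lam w (ρ x w))⁻¹ * ‖h x‖) ∂μ)
      ≤ ENNReal.ofReal K * ∫⁻ x in Q', (‖h x‖₊ : ENNReal) ∂μ := by
    rw [← lintegral_const_mul' _ _ ENNReal.ofReal_ne_top]
    refine lintegral_mono_ae ?_
    filter_upwards [ae_restrict_mem hQ'meas] with x hx
    calc ENNReal.ofReal (ℓ ^ α * ρ x w ^ (-α) * (lam w (ρ x w))⁻¹ * ‖h x‖)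
        ≤ ENNReal.ofReal (K * ‖h x‖) := ENNReal.ofReal_le_ofReal (hpt x hx)
      _ = ENNReal.ofReal K * ENNReal.ofReal ‖h x‖ := ENNReal.ofReal_mul hK0
      _ = ENNReal.ofReal K * (‖h x‖₊ : ENNReal) := by
          exact congrArg _ (ofReal_norm (h x))
  -- Step 3: Cauchy–Schwarz
  have hCS : (∫⁻ x in Q', (‖h x‖₊ : ENNReal) ∂μ) ≤ μ Q' ^ ((1:ℝ)/2) := by
    have hpq : Real.HolderConjugate 2 2 := Real.HolderConjugate.two_two
    have hf : AEMeasurable (fun x => (‖h x‖₊ : ENNReal)) (μ.restrict Q') :=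
      hmem.1.enorm.restrict
    have hg : AEMeasurable (fun _ : X => (1 : ENNReal)) (μ.restrict Q') :=
      aemeasurable_const
    have := ENNReal.lintegral_mul_le_Lp_mul_Lq (μ.restrict Q') hpq hf hg
    simp only [Pi.mul_apply, mul_one, ENNReal.one_rpow, lintegral_const,
      Measure.restrict_apply MeasurableSet.univ, Set.univ_inter, one_mul] at this
    have hL2 : (∫⁻ x in Q', (‖h x‖₊ : ENNReal) ^ (2:ℝ) ∂μ) ^ ((1:ℝ)/2) ≤ 1 := by
      have hsub : (∫⁻ x in Q', (‖h x‖₊ : ENNReal) ^ (2:ℝ) ∂μ)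
          ≤ ∫⁻ x, (‖h x‖₊ : ENNReal) ^ (2:ℝ) ∂μ := setLIntegral_le_lintegral _ _
      have hsn : (∫⁻ x, (‖h x‖₊ : ENNReal) ^ (2:ℝ) ∂μ) ^ ((1:ℝ)/2) = eLpNorm h 2 μ := by
        rw [eLpNorm_eq_lintegral_rpow_enorm_toReal (by norm_num) (by norm_num)]
        norm_num [enorm_eq_nnnorm]
      calc (∫⁻ x in Q', (‖h x‖₊ : ENNReal) ^ (2:ℝ) ∂μ) ^ ((1:ℝ)/2)
          ≤ (∫⁻ x, (‖h x‖₊ : ENNReal) ^ (2:ℝ) ∂μ) ^ ((1:ℝ)/2) :=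
            ENNReal.rpow_le_rpow hsub (by norm_num)
        _ = eLpNorm h 2 μ := hsn
        _ ≤ 1 := hnorm
    calc (∫⁻ x in Q', (‖h x‖₊ : ENNReal) ∂μ)
        ≤ (∫⁻ x in Q', (‖h x‖₊ : ENNReal) ^ (2:ℝ) ∂μ) ^ ((1:ℝ)/2) * μ Q' ^ ((1:ℝ)/2) := this
      _ ≤ 1 * μ Q' ^ ((1:ℝ)/2) := by gcongr
      _ = μ Q' ^ ((1:ℝ)/2) := one_mul _
  -- combine steps
  have hmain : (∫⁻ x in Q', ENNReal.ofReal (ℓ ^ α * ρ x w ^ (-α) * (lam w (ρ x w))⁻¹ * ‖h x‖) ∂μ)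
      ≤ ENNReal.ofReal K * μ Q' ^ ((1:ℝ)/2) := by
    calc _ ≤ ENNReal.ofReal K * ∫⁻ x in Q', (‖h x‖₊ : ENNReal) ∂μ := hstep2
      _ ≤ ENNReal.ofReal K * μ Q' ^ ((1:ℝ)/2) := by gcongr
  refine le_trans hmain ?_
  -- final constant positivity
  have hCconst : 0 < C₀ * Clam * M ^ t * c ^ (-α) * (ℓ / L) ^ (α / 2) := by positivity
  by_cases hS0 : μ S = 0
  · rw [hS0]
    have : (0:ENNReal) ^ (-(1/2) : ℝ) = ⊤ :=
      ENNReal.zero_rpow_of_neg (by norm_num)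
    rw [this, ENNReal.mul_top (by
      simp only [ne_eq, ENNReal.ofReal_eq_zero, not_le]; exact hCconst)]
    exact le_top
  -- now μ S ≠ 0
  have hμB_lam : μ B ≤ ENNReal.ofReal (lam z' (C_Q * L)) := hμlam z' (C_Q * L) hCQL
  have hμBfin : μ B ≠ ⊤ := fun hh => by simp [hh] at hμB_lam
  have hμSB : μ S ≤ μ B := hμS
  have hμB0 : μ B ≠ 0 := fun hh => hS0 (le_antisymm (hh ▸ hμSB) zero_le)
  have hμSfin : μ S ≠ ⊤ := fun hh => hμBfin (top_le_iff.1 (hh ▸ hμSB))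
  have hμQ'B : μ Q' ≤ μ B := measure_mono hQ'B
  -- μ B ^ (1/2) ≤ μ B * μ S ^ (-(1/2))
  have hBhalf : μ B ^ ((1:ℝ)/2) ≤ μ B * μ S ^ (-(1/2) : ℝ) := by
    have hSh0 : μ S ^ ((1:ℝ)/2) ≠ 0 := by
      simp [ENNReal.rpow_eq_zero_iff, hS0, hμSfin]
    have hShT : μ S ^ ((1:ℝ)/2) ≠ ⊤ := by
      simp [ENNReal.rpow_eq_top_iff, hS0, hμSfin]
    rw [show (-(1/2) : ℝ) = -((1:ℝ)/2) by norm_num, ENNReal.rpow_neg,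
      ← div_eq_mul_inv, ENNReal.le_div_iff_mul_le (Or.inl hSh0) (Or.inl hShT)]
    calc μ B ^ ((1:ℝ)/2) * μ S ^ ((1:ℝ)/2)
        ≤ μ B ^ ((1:ℝ)/2) * μ B ^ ((1:ℝ)/2) :=
          mul_le_mul_right (ENNReal.rpow_le_rpow hμSB (by norm_num)) _
      _ = μ B ^ (((1:ℝ)/2) + ((1:ℝ)/2)) := (ENNReal.rpow_add _ _ hμB0 hμBfin).symm
      _ = μ B := by norm_num
  -- the key real inequality
  have hkey : K * lam z' (C_Q * L) ≤ C₀ * Clam * M ^ t * c ^ (-α) * (ℓ / L) ^ (α / 2) := by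
    have h1 : lam z' (C_Q * L) ≤ C₀ * lam w (C_Q * L) := hlamsym z' w _ hz'w
    set R : ℝ := max (C_Q * L) r₀ with hR_def
    have hrR : r₀ ≤ R := le_max_right _ _
    have h2 : lam w (C_Q * L) ≤ lam w R := hlammono w _ _ hCQL (le_max_left _ _)
    have h3 : lam w R ≤ Clam * (R / r₀) ^ t * lam w r₀ :=
      doubling_rpow' hClam (fun r hr => hlampos w r hr)
        (fun r s hr hrs => hlammono w r s hr hrs)
        (fun r hr => hlamdbl w r hr) hr₀ hrR
    -- R / r₀ ≤ M * (L/ℓ)^γ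
    have hLℓ1 : 1 ≤ L / ℓ := (one_le_div hℓ).2 hℓL
    have hLℓγ1 : 1 ≤ (L/ℓ) ^ γ := Real.one_le_rpow hLℓ1 hγ0.le
    have hbase : R / r₀ ≤ M * (L/ℓ) ^ γ := by
      rw [hR_def, div_le_iff₀ hr₀]
      rcases max_cases (C_Q * L) r₀ with ⟨he, _⟩ | ⟨he, _⟩
      · rw [he]
        have hCQLr : C_Q * L = (C_Q / c) * (L/ℓ) ^ γ * r₀ := by
          rw [hr₀_def, Real.div_rpow hL.le hℓ.le]
          have hLγ : L ^ γ * L ^ (1-γ) = L := by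
            rw [← Real.rpow_add hL]; norm_num
          have hℓγ : ℓ ^ γ ≠ 0 := (Real.rpow_pos_of_pos hℓ γ).ne'
          field_simp
          linear_combination -hLγ
        rw [hCQLr]
        have hM' : C_Q / c ≤ M := le_max_left _ _
        have h4 : 0 ≤ (L/ℓ) ^ γ * r₀ := by positivity
        nlinarith [mul_le_mul_of_nonneg_right hM' h4]
      · rw [he]
        have h5 : 1 ≤ M * (L/ℓ) ^ γ := by
          have := mul_le_mul hM1 hLℓγ1 (by norm_num) (by linarith : (0:ℝ) ≤ M)
          linarith
        exact le_trans (le_of_eq (one_mul r₀).symm)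
          (mul_le_mul_of_nonneg_right h5 hr₀.le)
    have h4 : (R / r₀) ^ t ≤ M ^ t * (L/ℓ) ^ (γ * t) := by
      have hRr0 : 0 ≤ R / r₀ := by positivity
      calc (R / r₀) ^ t ≤ (M * (L/ℓ) ^ γ) ^ t := Real.rpow_le_rpow hRr0 hbase ht
        _ = M ^ t * ((L/ℓ) ^ γ) ^ t := Real.mul_rpow hM0.le (by positivity)
        _ = M ^ t * (L/ℓ) ^ (γ * t) := by rw [← Real.rpow_mul (by positivity)]
    -- put together
    have hchain : lam z' (C_Q * L) ≤ C₀ * (Clam * (M ^ t * (L/ℓ) ^ (γ * t)) * lam w r₀) := by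
      have h5 : lam w R ≤ Clam * (M ^ t * (L/ℓ) ^ (γ * t)) * lam w r₀ := by
        have hRr0t : 0 ≤ (R / r₀) ^ t := by positivity
        calc lam w R ≤ Clam * (R / r₀) ^ t * lam w r₀ := h3
          _ ≤ Clam * (M ^ t * (L/ℓ) ^ (γ * t)) * lam w r₀ :=
              mul_le_mul_of_nonneg_right
                (mul_le_mul_of_nonneg_left h4 (by linarith : (0:ℝ) ≤ Clam)) hlamw.le
      calc lam z' (C_Q * L) ≤ C₀ * lam w (C_Q * L) := h1
        _ ≤ C₀ * lam w R :=
              mul_le_mul_of_nonneg_left h2 (by linarith : (0:ℝ) ≤ C₀)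
        _ ≤ C₀ * (Clam * (M ^ t * (L/ℓ) ^ (γ * t)) * lam w r₀) :=
              mul_le_mul_of_nonneg_left h5 (by linarith : (0:ℝ) ≤ C₀)
    have halg : K * (C₀ * (Clam * (M ^ t * (L/ℓ) ^ (γ * t)) * lam w r₀))
        = C₀ * Clam * M ^ t * c ^ (-α) * (ℓ / L) ^ (α / 2) := by
      have hkk := key_rpow_algebra (α := α) (γ := γ) (t := t) hc hℓ hL hγαt
      rw [← hr₀_def] at hkk
      rw [hK_def]
      have hcancel : (lam w r₀)⁻¹ * lam w r₀ = 1 := inv_mul_cancel₀ hlamw.ne'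
      calc ℓ ^ α * r₀ ^ (-α) * (lam w r₀)⁻¹
            * (C₀ * (Clam * (M ^ t * (L/ℓ) ^ (γ * t)) * lam w r₀))
          = (ℓ ^ α * r₀ ^ (-α) * (L/ℓ) ^ (γ * t)) * (C₀ * Clam * M ^ t)
            * ((lam w r₀)⁻¹ * lam w r₀) := by ring
        _ = (c ^ (-α) * (ℓ/L) ^ (α/2)) * (C₀ * Clam * M ^ t) * 1 := by rw [hkk, hcancel]
        _ = C₀ * Clam * M ^ t * c ^ (-α) * (ℓ / L) ^ (α / 2) := by ring
    calc K * lam z' (C_Q * L) ≤ K * (C₀ * (Clam * (M ^ t * (L/ℓ) ^ (γ * t)) * lam w r₀)) := by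
          apply mul_le_mul_of_nonneg_left hchain hK0
      _ = C₀ * Clam * M ^ t * c ^ (-α) * (ℓ / L) ^ (α / 2) := halg
  -- finish
  calc ENNReal.ofReal K * μ Q' ^ ((1:ℝ)/2)
      ≤ ENNReal.ofReal K * μ B ^ ((1:ℝ)/2) :=
        mul_le_mul_right (ENNReal.rpow_le_rpow hμQ'B (by norm_num)) _
    _ ≤ ENNReal.ofReal K * (μ B * μ S ^ (-(1/2) : ℝ)) :=
        mul_le_mul_right hBhalf _
    _ = (ENNReal.ofReal K * μ B) * μ S ^ (-(1/2) : ℝ) := (mul_assoc _ _ _).symm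
    _ ≤ (ENNReal.ofReal K * ENNReal.ofReal (lam z' (C_Q * L))) * μ S ^ (-(1/2) : ℝ) :=
        mul_le_mul_left (mul_le_mul_right hμB_lam _) _
    _ = ENNReal.ofReal (K * lam z' (C_Q * L)) * μ S ^ (-(1/2) : ℝ) := by
        rw [ENNReal.ofReal_mul hK0]
    _ ≤ ENNReal.ofReal (C₀ * Clam * M ^ t * c ^ (-α) * (ℓ / L) ^ (α / 2)) * μ S ^ (-(1/2) : ℝ) :=
        mul_le_mul_left (ENNReal.ofReal_le_ofReal hkey) _
end

section
/- Let (X₁,ρ₁,μ₁) and (X₂,ρ₂,μ₂) be quasimetric spaces with upper doubling measures with dominating functions λ₁, λ₂ and constants C_{λ₁}, C_{λ₂}; let αᵢ > 0, C_Q ≥ 1, C_K ≥ 1, C_H ≥ 0, and let K be a measurable kernel on (X₁×X₂)×(X₁×X₂) satisfying: whenever ρ₁(x₁,x_{Q₁}) ≤ ρ₁(x_{Q₁},y₁)/C_K and ρ₂(x₂,x_{Q₂}) ≤ ρ₂(x_{Q₂},y₂)/C_K, |K((x₁,x₂),y) − K((x_{Q₁},x₂),y) − K((x₁,x_{Q₂}),y)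 + K((x_{Q₁},x_{Q₂}),y)| ≤ C_H [ρ₁(x₁,x_{Q₁})^{α₁}/(ρ₁(x_{Q₁},y₁)^{α₁} λ₁(x_{Q₁},ρ₁(x_{Q₁},y₁)))] · [ρ₂(x₂,x_{Q₂})^{α₂}/(ρ₂(x_{Q₂},y₂)^{α₂} λ₂(x_{Q₂},ρ₂(x_{Q₂},y₂)))]. Let Q₁ ⊆ B(x_{Q₁}, C_Q ℓ₁) ⊆ X₁ and Q₂ ⊆ B(x_{Q₂}, C_Q ℓ₂) ⊆ X₂ with ℓ₁, ℓ₂ > 0, and let U ⊇ B(x_{Q₁}, C_K C_Q ℓ₁) and V ⊇ B(x_{Q₂}, C_K C_Q ℓ₂) be measurable. Let h₁ ∈ L²(μ₁) be supported in Q₁ with ∫ h₁ dμ₁ = 0 and ‖h₁‖_{L²(μ₁)} ≤ 1, and let h₂ ∈ L²(μ₂) be supported in Q₂ with ∫ h₂ dμ₂ = 0 and ‖h₂‖_{L²(μ₂)} ≤ 1; assume the integrand below and its base-point modifications are absolutely integrable. Then |∫_{X₁∖U} ∫_{X₂∖V} ∫_{Q₁} ∫_{Q₂} K((x₁,x₂),(y₁,y₂))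 h₁(x₁) h₂(x₂) dμ₂(x₂) dμ₁(x₁) dμ₂(y₂) dμ₁(y₁)| ≤ C' μ₁(Q₁)^{1/2} μ₂(Q₂)^{1/2}, where C' depends only on C_H, C_{λ₁}, C_{λ₂}, α₁, α₂, C_Q and C_K. -/
open MeasureTheory

open Set
open scoped ENNReal NNReal

section A4helpers

variable {α β : Type*} [MeasurableSpace α] [MeasurableSpace β]

private lemma my_lintegral_prod_le (μ : Measure α) (ν : Measure β) [SFinite ν]
    (f : α × β → ℝ≥0∞) :
    ∫⁻ z, f z ∂μ.prod ν ≤ ∫⁻ x, ∫⁻ y, f (x, y) ∂ν ∂μ := by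
  rw [lintegral_def]
  refine iSup₂_le fun g hg => ?_
  calc g.lintegral (μ.prod ν) = ∫⁻ z, g z ∂μ.prod ν := (g.lintegral_eq_lintegral _).symm
    _ = ∫⁻ x, ∫⁻ y, g (x, y) ∂ν ∂μ := lintegral_prod _ g.measurable.aemeasurable
    _ ≤ _ := lintegral_mono fun x => lintegral_mono fun y => hg _

private lemma my_ae_prod_fst (μ : Measure α) (ν : Measure β) [SFinite ν] {p : α → Prop}
    (h : ∀ᵐ x ∂μ, p x) : ∀ᵐ z ∂μ.prod ν, p z.1 := by
  rw [ae_iff] at h ⊢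
  refine measure_mono_null (fun z hz => Set.mem_prod.2
    ⟨subset_toMeasurable μ {x | ¬ p x} hz, Set.mem_univ _⟩) ?_
  rw [Measure.prod_prod, measure_toMeasurable, h, zero_mul]

private lemma my_ae_prod_snd (μ : Measure α) (ν : Measure β) [SFinite ν] {p : β → Prop}
    (h : ∀ᵐ y ∂ν, p y) : ∀ᵐ z ∂μ.prod ν, p z.2 := by
  rw [ae_iff] at h ⊢
  refine measure_mono_null (fun z hz => Set.mem_prod.2
    ⟨Set.mem_univ _, subset_toMeasurable ν {y | ¬ p y} hz⟩) ?_
  rw [Measure.prod_prod, measure_toMeasurable, h, mul_zero]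

private lemma my_sigmaFinite {X : Type} [MeasurableSpace X]
    (ρ : X → X → ℝ) (μ : Measure X) (lam : X → ℝ → ℝ) (x₀ : X)
    (hμlam : ∀ x r, 0 < r → μ {y | ρ x y < r} ≤ ENNReal.ofReal (lam x r)) :
    SigmaFinite μ := by
  refine ⟨⟨⟨fun n => toMeasurable μ {y | ρ x₀ y < n + 1}, fun _ => trivial, ?_, ?_⟩⟩⟩
  · intro n
    rw [measure_toMeasurable]
    exact lt_of_le_of_lt (hμlam x₀ (n + 1) (by positivity)) ENNReal.ofReal_lt_top
  · apply eq_univ_of_forall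
    intro y
    rw [mem_iUnion]
    refine ⟨⌊ρ x₀ y⌋₊, subset_toMeasurable _ _ ?_⟩
    have := Nat.lt_floor_add_one (ρ x₀ y)
    simpa using this

private lemma my_exists_dyadic {t : ℝ} (ht : 1 ≤ t) : ∃ k : ℕ, (2:ℝ)^k ≤ t ∧ t < 2^(k+1) := by
  refine ⟨Nat.log 2 ⌊t⌋₊, ?_, ?_⟩
  · calc ((2:ℝ) ^ Nat.log 2 ⌊t⌋₊) = ((2 ^ Nat.log 2 ⌊t⌋₊ : ℕ) : ℝ) := by push_cast; ring
      _ ≤ (⌊t⌋₊ : ℝ) := by exact_mod_cast Nat.pow_log_le_self 2 (Nat.floor_pos.2 ht).ne'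
      _ ≤ t := Nat.floor_le (by linarith)
  · have h2 : ⌊t⌋₊ < 2 ^ (Nat.log 2 ⌊t⌋₊ + 1) := Nat.lt_pow_succ_log_self (by norm_num) _
    calc t < ⌊t⌋₊ + 1 := Nat.lt_floor_add_one t
      _ ≤ ((2:ℝ) ^ (Nat.log 2 ⌊t⌋₊ + 1)) := by exact_mod_cast Nat.succ_le_of_lt h2

private lemma my_cs_bound {X : Type} [MeasurableSpace X] (μ : Measure X) (Q : Set X) (h : X → ℂ)
    (hm : AEStronglyMeasurable h μ) (hn : eLpNorm h 2 μ ≤ 1) :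
    ∫⁻ x in Q, ENNReal.ofReal ‖h x‖ ∂μ ≤ (μ Q) ^ ((1:ℝ)/2) := by
  have hconj : Real.HolderConjugate 2 2 := Real.HolderConjugate.two_two
  have hmeas : AEMeasurable (fun x => ENNReal.ofReal ‖h x‖) (μ.restrict Q) :=
    (hm.restrict.norm.aemeasurable).ennreal_ofReal
  have H := ENNReal.lintegral_mul_le_Lp_mul_Lq (μ.restrict Q) hconj hmeas
      (aemeasurable_const (b := (1:ℝ≥0∞)))
  simp only [Pi.mul_apply, mul_one, ENNReal.one_rpow, lintegral_const, one_mul,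
    Measure.restrict_apply_univ] at H
  refine H.trans ?_
  have h2 : (∫⁻ x, (ENNReal.ofReal ‖h x‖) ^ (2:ℝ) ∂μ) ^ ((1:ℝ)/2) ≤ 1 := by
    have he : eLpNorm h 2 μ = (∫⁻ x, (ENNReal.ofReal ‖h x‖) ^ (2:ℝ) ∂μ) ^ ((1:ℝ)/2) := by
      rw [eLpNorm_eq_lintegral_rpow_enorm_toReal (by norm_num) (by norm_num)]
      simp only [ENNReal.toReal_ofNat]
      congr 1
      exact lintegral_congr fun x => by rw [← ofReal_norm_eq_enorm]
    rw [← he]; exact hn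
  calc (∫⁻ x, (ENNReal.ofReal ‖h x‖) ^ (2:ℝ) ∂μ.restrict Q) ^ ((1:ℝ)/2) * (μ Q) ^ ((1:ℝ)/2)
      ≤ (∫⁻ x, (ENNReal.ofReal ‖h x‖) ^ (2:ℝ) ∂μ) ^ ((1:ℝ)/2) * (μ Q) ^ ((1:ℝ)/2) := by
        gcongr
        exact Measure.restrict_le_self
    _ ≤ 1 * (μ Q) ^ ((1:ℝ)/2) := by gcongr
    _ = (μ Q) ^ ((1:ℝ)/2) := one_mul _

private lemma my_tail_bound {X : Type} [MeasurableSpace X]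
    {Clam α C_Q C_K : ℝ}
    (hClam : 1 ≤ Clam) (hα : 0 < α) (hC_Q : 1 ≤ C_Q) (hC_K : 1 ≤ C_K)
    (ρ : X → X → ℝ) (μ : Measure X) (lam : X → ℝ → ℝ) (xQ : X) {ℓ : ℝ} {U : Set X}
    (hlam_pos : ∀ x r, 0 < r → 0 < lam x r)
    (hlam_mono : ∀ x r s, 0 < r → r ≤ s → lam x r ≤ lam x s)
    (hlam_doub : ∀ x r, 0 < r → lam x (2*r) ≤ Clam * lam x r)
    (hμlam : ∀ x r, 0 < r → μ {y | ρ x y < r} ≤ ENNReal.ofReal (lam x r))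
    (hUm : MeasurableSet U)
    (hℓ : 0 < ℓ) (hU : {y | ρ xQ y < C_K * C_Q * ℓ} ⊆ U) :
    ∫⁻ y in Uᶜ, ENNReal.ofReal ((C_Q*ℓ)^α / (ρ xQ y ^ α * lam xQ (ρ xQ y))) ∂μ
      ≤ ENNReal.ofReal (Clam / (1 - 2^(-α))) := by
  have hCK0 : (0:ℝ) < C_K := lt_of_lt_of_le one_pos hC_K
  have hCQ0 : (0:ℝ) < C_Q := lt_of_lt_of_le one_pos hC_Q
  set R := C_K * C_Q * ℓ with hRdef
  have hR : 0 < R := by positivity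
  have hr1 : (0:ℝ) < 2^(-α) := Real.rpow_pos_of_pos two_pos _
  have hr2 : (2:ℝ)^(-α) < 1 :=
    Real.rpow_lt_one_of_one_lt_of_neg one_lt_two (neg_lt_zero.2 hα)
  set T : ℕ → Set X := fun k => toMeasurable μ {y | ρ xQ y < 2^(k+1) * R} with hTdef
  have hTm : ∀ k, MeasurableSet (T k) := fun k => measurableSet_toMeasurable _ _
  set c : ℕ → ℝ≥0∞ :=
    fun k => ENNReal.ofReal ((C_Q*ℓ)^α / ((2^k*R)^α * lam xQ (2^k*R))) with hcdef
  have hpt : ∀ y ∈ Uᶜ, ENNReal.ofReal ((C_Q*ℓ)^α / (ρ xQ y ^ α * lam xQ (ρ xQ y)))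
      ≤ ∑' k, (T k).indicator (fun _ => c k) y := by
    intro y hy
    have hρR : R ≤ ρ xQ y := le_of_not_gt fun hlt => hy (hU hlt)
    have ht1 : 1 ≤ ρ xQ y / R := (one_le_div hR).2 hρR
    obtain ⟨k, hk1, hk2⟩ := my_exists_dyadic ht1
    have hk1' : 2^k * R ≤ ρ xQ y := by
      rw [← le_div_iff₀ hR]; exact hk1
    have hk2' : ρ xQ y < 2^(k+1) * R := by
      rw [← div_lt_iff₀ hR]; exact hk2
    have h2kR : (0:ℝ) < 2^k * R := by positivity
    have hρpos : (0:ℝ) < ρ xQ y := lt_of_lt_of_le hR hρR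
    have hle : ENNReal.ofReal ((C_Q*ℓ)^α / (ρ xQ y ^ α * lam xQ (ρ xQ y))) ≤ c k := by
      apply ENNReal.ofReal_le_ofReal
      apply div_le_div_of_nonneg_left (Real.rpow_nonneg (by positivity) _)
        (mul_pos (Real.rpow_pos_of_pos h2kR _) (hlam_pos _ _ h2kR))
      exact mul_le_mul (Real.rpow_le_rpow h2kR.le hk1' hα.le)
        (hlam_mono _ _ _ h2kR hk1') (hlam_pos _ _ h2kR).le
        (Real.rpow_nonneg hρpos.le _)
    refine hle.trans ?_
    have hyT : y ∈ T k := subset_toMeasurable μ _ hk2'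
    have : c k = (T k).indicator (fun _ => c k) y :=
      (Set.indicator_of_mem hyT (fun _ => c k)).symm
    rw [this]
    exact ENNReal.le_tsum k
  calc ∫⁻ y in Uᶜ, ENNReal.ofReal ((C_Q*ℓ)^α / (ρ xQ y ^ α * lam xQ (ρ xQ y))) ∂μ
      ≤ ∫⁻ y in Uᶜ, ∑' k, (T k).indicator (fun _ => c k) y ∂μ := by
        refine lintegral_mono_ae ?_
        filter_upwards [ae_restrict_mem hUm.compl] with y hy using hpt y hy
    _ = ∑' k, ∫⁻ y in Uᶜ, (T k).indicator (fun _ => c k) y ∂μ :=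
        lintegral_tsum fun k => (measurable_const.indicator (hTm k)).aemeasurable
    _ ≤ ∑' k, ENNReal.ofReal (Clam * ((2:ℝ)^(-α))^k) := by
        refine ENNReal.tsum_le_tsum fun k => ?_
        rw [lintegral_indicator_const (hTm k)]
        have h2kR : (0:ℝ) < 2^k * R := by positivity
        have h2k1R : (0:ℝ) < 2^(k+1) * R := by positivity
        have hmeasT : (μ.restrict Uᶜ) (T k) ≤ ENNReal.ofReal (lam xQ (2^(k+1)*R)) := by
          refine le_trans (Measure.restrict_apply_le _ _) ?_
          rw [hTdef]
          simp only []
          rw [measure_toMeasurable]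
          exact hμlam _ _ h2k1R
        refine le_trans (mul_le_mul_right hmeasT _) ?_
        have hlamk : 0 < lam xQ (2^k*R) := hlam_pos _ _ h2kR
        rw [hcdef]
        simp only []
        rw [← ENNReal.ofReal_mul (div_nonneg (Real.rpow_nonneg (by positivity) _)
          (mul_pos (Real.rpow_pos_of_pos h2kR _) hlamk).le)]
        apply ENNReal.ofReal_le_ofReal
        have hstep : lam xQ (2^(k+1)*R) ≤ Clam * lam xQ (2^k*R) := by
          have h2 : (2:ℝ)^(k+1)*R = 2*(2^k*R) := by ring
          rw [h2]; exact hlam_doub _ _ h2kR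
        calc (C_Q*ℓ)^α / ((2^k*R)^α * lam xQ (2^k*R)) * lam xQ (2^(k+1)*R)
            ≤ (C_Q*ℓ)^α / ((2^k*R)^α * lam xQ (2^k*R)) * (Clam * lam xQ (2^k*R)) := by
              apply mul_le_mul_of_nonneg_left hstep
              exact div_nonneg (Real.rpow_nonneg (by positivity) _)
                (mul_pos (Real.rpow_pos_of_pos h2kR _) hlamk).le
          _ = Clam * ((C_Q*ℓ)^α / (2^k*R)^α) := by field_simp
          _ = Clam * ((C_Q*ℓ) / (2^k*R))^α := by
              rw [Real.div_rpow (by positivity) (by positivity)]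
          _ ≤ Clam * (((2:ℝ)^(-α))^k) := by
              apply mul_le_mul_of_nonneg_left _ (by linarith)
              have hbase : (C_Q*ℓ) / (2^k*R) ≤ ((2:ℝ)^k)⁻¹ := by
                rw [hRdef]
                rw [div_le_iff₀ (by positivity)]
                have heq2 : ((2:ℝ)^k)⁻¹ * (2^k * (C_K * C_Q * ℓ)) = C_K * (C_Q * ℓ) := by
                  field_simp
                rw [heq2]
                nlinarith [mul_pos hCQ0 hℓ]
              have heq : (((2:ℝ)^k)⁻¹ : ℝ)^α = ((2:ℝ)^(-α))^k := by
                rw [← Real.rpow_natCast (2:ℝ) k, ← Real.rpow_neg (by norm_num),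
                  ← Real.rpow_natCast ((2:ℝ)^(-α)) k, ← Real.rpow_mul (by norm_num),
                  ← Real.rpow_mul (by norm_num)]
                ring_nf
              calc ((C_Q*ℓ) / (2^k*R))^α ≤ (((2:ℝ)^k)⁻¹)^α :=
                    Real.rpow_le_rpow (by positivity) hbase hα.le
                _ = ((2:ℝ)^(-α))^k := heq
    _ = ENNReal.ofReal (∑' k, Clam * ((2:ℝ)^(-α))^k) := by
        rw [ENNReal.ofReal_tsum_of_nonneg (fun k => by positivity)
          ((summable_geometric_of_lt_one hr1.le hr2).mul_left Clam)]
    _ ≤ ENNReal.ofReal (Clam / (1 - 2^(-α))) := by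
        apply ENNReal.ofReal_le_ofReal
        rw [tsum_mul_left, tsum_geometric_of_lt_one hr1.le hr2, div_eq_mul_inv]

end A4helpers


/-- the estimate |A₄(U,V)| ≲ μ₁(Q₁)^{1/2} μ₂(Q₂)^{1/2} from the
interpretation of T(1) (Section 2.9 of the paper). -/
theorem A4_estimate
    (C_H Clam₁ Clam₂ α₁ α₂ C_Q C_K : ℝ)
    (hC_H : 0 ≤ C_H) (hClam₁ : 1 ≤ Clam₁) (hClam₂ : 1 ≤ Clam₂)
    (hα₁ : 0 < α₁) (hα₂ : 0 < α₂) (hC_Q : 1 ≤ C_Q) (hC_K : 1 ≤ C_K) :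
    ∃ C' : ℝ, 0 < C' ∧
      ∀ (X₁ X₂ : Type) [MeasurableSpace X₁] [MeasurableSpace X₂]
        (A₀ : ℝ) (ρ₁ : X₁ → X₁ → ℝ) (ρ₂ : X₂ → X₂ → ℝ)
        (μ₁ : Measure X₁) (μ₂ : Measure X₂)
        (lam₁ : X₁ → ℝ → ℝ) (lam₂ : X₂ → ℝ → ℝ)
        (K : X₁ × X₂ → X₁ × X₂ → ℂ)
        (xQ₁ : X₁) (xQ₂ : X₂) (ℓ₁ ℓ₂ : ℝ)
        (Q₁ U : Set X₁) (Q₂ V : Set X₂)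
        (h₁ : X₁ → ℂ) (h₂ : X₂ → ℂ),
        1 ≤ A₀ →
        (∀ x y, 0 ≤ ρ₁ x y) → (∀ x y, ρ₁ x y = 0 ↔ x = y) →
        (∀ x y, ρ₁ x y = ρ₁ y x) → (∀ x y z, ρ₁ x z ≤ A₀ * (ρ₁ x y + ρ₁ y z)) →
        (∀ x y, 0 ≤ ρ₂ x y) → (∀ x y, ρ₂ x y = 0 ↔ x = y) →
        (∀ x y, ρ₂ x y = ρ₂ y x) → (∀ x y z, ρ₂ x z ≤ A₀ * (ρ₂ x y + ρ₂ y z)) →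
        (∀ x r, 0 < r → 0 < lam₁ x r) →
        (∀ x r s, 0 < r → r ≤ s → lam₁ x r ≤ lam₁ x s) →
        (∀ x r, 0 < r → lam₁ x (2 * r) ≤ Clam₁ * lam₁ x r) →
        (∀ x r, 0 < r → μ₁ {y | ρ₁ x y < r} ≤ ENNReal.ofReal (lam₁ x r)) →
        (∀ x r, 0 < r → 0 < lam₂ x r) →
        (∀ x r s, 0 < r → r ≤ s → lam₂ x r ≤ lam₂ x s) →
        (∀ x r, 0 < r → lam₂ x (2 * r) ≤ Clam₂ * lam₂ x r) →
        (∀ x r, 0 < r → μ₂ {y | ρ₂ x y < r} ≤ ENNReal.ofReal (lam₂ x r)) →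
        (∀ x₁ x₂ y₁ y₂,
          ρ₁ x₁ xQ₁ ≤ ρ₁ xQ₁ y₁ / C_K → ρ₂ x₂ xQ₂ ≤ ρ₂ xQ₂ y₂ / C_K →
          ‖K (x₁, x₂) (y₁, y₂) - K (xQ₁, x₂) (y₁, y₂)
              - K (x₁, xQ₂) (y₁, y₂) + K (xQ₁, xQ₂) (y₁, y₂)‖
            ≤ C_H * (ρ₁ x₁ xQ₁ ^ α₁ / (ρ₁ xQ₁ y₁ ^ α₁ * lam₁ xQ₁ (ρ₁ xQ₁ y₁)))
                * (ρ₂ x₂ xQ₂ ^ α₂ / (ρ₂ xQ₂ y₂ ^ α₂ * lam₂ xQ₂ (ρ₂ xQ₂ y₂)))) →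
        0 < ℓ₁ → 0 < ℓ₂ →
        MeasurableSet Q₁ → MeasurableSet Q₂ → MeasurableSet U → MeasurableSet V →
        Q₁ ⊆ {y | ρ₁ xQ₁ y < C_Q * ℓ₁} → Q₂ ⊆ {y | ρ₂ xQ₂ y < C_Q * ℓ₂} →
        {y | ρ₁ xQ₁ y < C_K * C_Q * ℓ₁} ⊆ U → {y | ρ₂ xQ₂ y < C_K * C_Q * ℓ₂} ⊆ V →
        Function.support h₁ ⊆ Q₁ → MemLp h₁ 2 μ₁ → eLpNorm h₁ 2 μ₁ ≤ 1 →
        (∫ x, h₁ x ∂μ₁) = 0 →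
        Function.support h₂ ⊆ Q₂ → MemLp h₂ 2 μ₂ → eLpNorm h₂ 2 μ₂ ≤ 1 →
        (∫ x, h₂ x ∂μ₂) = 0 →
        Integrable (fun q : (X₁ × X₂) × (X₁ × X₂) =>
            K q.2 q.1 * h₁ q.2.1 * h₂ q.2.2)
          (((μ₁.restrict Uᶜ).prod (μ₂.restrict Vᶜ)).prod
            ((μ₁.restrict Q₁).prod (μ₂.restrict Q₂))) →
        Integrable (fun q : (X₁ × X₂) × (X₁ × X₂) =>
            K (xQ₁, q.2.2) q.1 * h₁ q.2.1 * h₂ q.2.2)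
          (((μ₁.restrict Uᶜ).prod (μ₂.restrict Vᶜ)).prod
            ((μ₁.restrict Q₁).prod (μ₂.restrict Q₂))) →
        Integrable (fun q : (X₁ × X₂) × (X₁ × X₂) =>
            K (q.2.1, xQ₂) q.1 * h₁ q.2.1 * h₂ q.2.2)
          (((μ₁.restrict Uᶜ).prod (μ₂.restrict Vᶜ)).prod
            ((μ₁.restrict Q₁).prod (μ₂.restrict Q₂))) →
        Integrable (fun q : (X₁ × X₂) × (X₁ × X₂) =>
            K (xQ₁, xQ₂) q.1 * h₁ q.2.1 * h₂ q.2.2)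
          (((μ₁.restrict Uᶜ).prod (μ₂.restrict Vᶜ)).prod
            ((μ₁.restrict Q₁).prod (μ₂.restrict Q₂))) →
        ‖∫ y₁ in Uᶜ, (∫ y₂ in Vᶜ, (∫ x₁ in Q₁, (∫ x₂ in Q₂,
            K (x₁, x₂) (y₁, y₂) * h₁ x₁ * h₂ x₂ ∂μ₂) ∂μ₁) ∂μ₂) ∂μ₁‖
          ≤ C' * (μ₁ Q₁).toReal ^ ((1 : ℝ) / 2) * (μ₂ Q₂).toReal ^ ((1 : ℝ) / 2) := by
  have hden₁ : (0:ℝ) < 1 - 2^(-α₁) := by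
    have := Real.rpow_lt_one_of_one_lt_of_neg one_lt_two (neg_lt_zero.2 hα₁); linarith
  have hden₂ : (0:ℝ) < 1 - 2^(-α₂) := by
    have := Real.rpow_lt_one_of_one_lt_of_neg one_lt_two (neg_lt_zero.2 hα₂); linarith
  set t₁ : ℝ := Clam₁ / (1 - 2^(-α₁)) with ht₁def
  set t₂ : ℝ := Clam₂ / (1 - 2^(-α₂)) with ht₂def
  have ht₁0 : 0 < t₁ := div_pos (by linarith) hden₁
  have ht₂0 : 0 < t₂ := div_pos (by linarith) hden₂
  refine ⟨(C_H + 1) * t₁ * t₂, by positivity, ?_⟩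
  intro X₁ X₂ _ _ A₀ ρ₁ ρ₂ μ₁ μ₂ lam₁ lam₂ K xQ₁ xQ₂ ℓ₁ ℓ₂ Q₁ U Q₂ V h₁ h₂
  intro hA₀ hρ₁nn hρ₁eq hρ₁symm hρ₁tri hρ₂nn hρ₂eq hρ₂symm hρ₂tri
  intro hlam₁pos hlam₁mono hlam₁doub hμ₁lam hlam₂pos hlam₂mono hlam₂doub hμ₂lam
  intro hK hℓ₁ hℓ₂ hQ₁m hQ₂m hUm hVm hQ₁sub hQ₂sub hUsub hVsub
  intro hsupp₁ hmem₁ hnorm₁ hint₁ hsupp₂ hmem₂ hnorm₂ hint₂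
  intro hI1 hI2 hI3 hI4
  haveI : SigmaFinite μ₁ := my_sigmaFinite ρ₁ μ₁ lam₁ xQ₁ hμ₁lam
  haveI : SigmaFinite μ₂ := my_sigmaFinite ρ₂ μ₂ lam₂ xQ₂ hμ₂lam
  have hCK0 : (0:ℝ) < C_K := lt_of_lt_of_le one_pos hC_K
  have hCQ0 : (0:ℝ) < C_Q := lt_of_lt_of_le one_pos hC_Q
  set P : Measure (X₁ × X₂) := (μ₁.restrict Uᶜ).prod (μ₂.restrict Vᶜ) with hPdef
  set ν : Measure (X₁ × X₂) := (μ₁.restrict Q₁).prod (μ₂.restrict Q₂) with hνdef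
  set M : Measure ((X₁ × X₂) × (X₁ × X₂)) := P.prod ν with hMdef
  haveI hsfP : SFinite P := by rw [hPdef]; infer_instance
  haveI hsfν : SFinite ν := by rw [hνdef]; infer_instance
  -- iterated integral representation
  have quad : ∀ (f : (X₁ × X₂) × (X₁ × X₂) → ℂ), Integrable f M →
      (∫ z, f z ∂M)
      = ∫ y₁ in Uᶜ, ∫ y₂ in Vᶜ, ∫ x₁ in Q₁, ∫ x₂ in Q₂,
          f ((y₁, y₂), (x₁, x₂)) ∂μ₂ ∂μ₁ ∂μ₂ ∂μ₁ := by
    intro f hf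
    rw [hMdef, integral_prod _ hf, hPdef, integral_prod _ hf.integral_prod_left]
    refine integral_congr_ae ?_
    filter_upwards [Measure.ae_ae_of_ae_prod hf.prod_right_ae] with y₁ hy₁
    refine integral_congr_ae ?_
    filter_upwards [hy₁] with y₂ hy₂
    exact integral_prod _ hy₂
  -- the support conditions
  have hQ₁0 : ∫ x in Q₁, h₁ x ∂μ₁ = 0 := by
    rw [setIntegral_eq_integral_of_forall_compl_eq_zero
      (fun x hx => not_not.mp fun h0 => hx (hsupp₁ h0))]
    exact hint₁
  have hQ₂0 : ∫ x in Q₂, h₂ x ∂μ₂ = 0 := by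
    rw [setIntegral_eq_integral_of_forall_compl_eq_zero
      (fun x hx => not_not.mp fun h0 => hx (hsupp₂ h0))]
    exact hint₂
  -- vanishing of the three base-point terms
  have hz2 : ∫ z, K (xQ₁, z.2.2) z.1 * h₁ z.2.1 * h₂ z.2.2 ∂M = 0 := by
    rw [hMdef, integral_prod _ hI2]
    have inner : ∀ p : X₁ × X₂,
        (∫ q, K (xQ₁, q.2) p * h₁ q.1 * h₂ q.2 ∂ν) = 0 := by
      intro p
      have hre : (fun q : X₁ × X₂ => K (xQ₁, q.2) p * h₁ q.1 * h₂ q.2)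
          = fun q : X₁ × X₂ => h₁ q.1 * (K (xQ₁, q.2) p * h₂ q.2) := by
        funext q; ring
      rw [hre, hνdef, integral_prod_mul h₁ (fun x₂ => K (xQ₁, x₂) p * h₂ x₂), hQ₁0, zero_mul]
    simp only [inner, integral_zero]
  have hz3 : ∫ z, K (z.2.1, xQ₂) z.1 * h₁ z.2.1 * h₂ z.2.2 ∂M = 0 := by
    rw [hMdef, integral_prod _ hI3]
    have inner : ∀ p : X₁ × X₂,
        (∫ q, K (q.1, xQ₂) p * h₁ q.1 * h₂ q.2 ∂ν) = 0 := by
      intro p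
      rw [hνdef, integral_prod_mul (fun x₁ => K (x₁, xQ₂) p * h₁ x₁) h₂, hQ₂0, mul_zero]
    simp only [inner, integral_zero]
  have hz4 : ∫ z, K (xQ₁, xQ₂) z.1 * h₁ z.2.1 * h₂ z.2.2 ∂M = 0 := by
    rw [hMdef, integral_prod _ hI4]
    have inner : ∀ p : X₁ × X₂,
        (∫ q, K (xQ₁, xQ₂) p * h₁ q.1 * h₂ q.2 ∂ν) = 0 := by
      intro p
      rw [hνdef, integral_prod_mul (fun x₁ => K (xQ₁, xQ₂) p * h₁ x₁) h₂, hQ₂0, mul_zero]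
    simp only [inner, integral_zero]
  -- reduction to the difference kernel
  have hfour : ∫ z, (K z.2 z.1 * h₁ z.2.1 * h₂ z.2.2
        - K (xQ₁, z.2.2) z.1 * h₁ z.2.1 * h₂ z.2.2
        - K (z.2.1, xQ₂) z.1 * h₁ z.2.1 * h₂ z.2.2
        + K (xQ₁, xQ₂) z.1 * h₁ z.2.1 * h₂ z.2.2) ∂M
      = ∫ z, K z.2 z.1 * h₁ z.2.1 * h₂ z.2.2 ∂M := by
    have hIa : Integrable (fun z : (X₁ × X₂) × (X₁ × X₂) =>
        K z.2 z.1 * h₁ z.2.1 * h₂ z.2.2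
          - K (xQ₁, z.2.2) z.1 * h₁ z.2.1 * h₂ z.2.2) M := hI1.sub hI2
    have hIb : Integrable (fun z : (X₁ × X₂) × (X₁ × X₂) =>
        K z.2 z.1 * h₁ z.2.1 * h₂ z.2.2
          - K (xQ₁, z.2.2) z.1 * h₁ z.2.1 * h₂ z.2.2
          - K (z.2.1, xQ₂) z.1 * h₁ z.2.1 * h₂ z.2.2) M := hIa.sub hI3
    rw [integral_add hIb hI4, integral_sub hIa hI3, integral_sub hI1 hI2, hz2, hz3, hz4]
    ring
  have hIF : Integrable (fun z : (X₁ × X₂) × (X₁ × X₂) =>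
      K z.2 z.1 * h₁ z.2.1 * h₂ z.2.2
        - K (xQ₁, z.2.2) z.1 * h₁ z.2.1 * h₂ z.2.2
        - K (z.2.1, xQ₂) z.1 * h₁ z.2.1 * h₂ z.2.2
        + K (xQ₁, xQ₂) z.1 * h₁ z.2.1 * h₂ z.2.2) M :=
    ((hI1.sub hI2).sub hI3).add hI4
  -- Q-side lintegrals
  set N₁ : ℝ≥0∞ := ∫⁻ x in Q₁, ENNReal.ofReal ‖h₁ x‖ ∂μ₁ with hN₁def
  set N₂ : ℝ≥0∞ := ∫⁻ x in Q₂, ENNReal.ofReal ‖h₂ x‖ ∂μ₂ with hN₂def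
  have hN₁ : N₁ ≤ (μ₁ Q₁) ^ ((1:ℝ)/2) :=
    my_cs_bound μ₁ Q₁ h₁ hmem₁.aestronglyMeasurable hnorm₁
  have hN₂ : N₂ ≤ (μ₂ Q₂) ^ ((1:ℝ)/2) :=
    my_cs_bound μ₂ Q₂ h₂ hmem₂.aestronglyMeasurable hnorm₂
  have hμQ₁ : μ₁ Q₁ ≠ ∞ := by
    refine ((le_trans (measure_mono hQ₁sub) (hμ₁lam xQ₁ (C_Q*ℓ₁) (by positivity))).trans_lt
      ENNReal.ofReal_lt_top).ne
  have hμQ₂ : μ₂ Q₂ ≠ ∞ := by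
    refine ((le_trans (measure_mono hQ₂sub) (hμ₂lam xQ₂ (C_Q*ℓ₂) (by positivity))).trans_lt
      ENNReal.ofReal_lt_top).ne
  have hN₁fin : N₁ ≠ ∞ :=
    (lt_of_le_of_lt hN₁ (ENNReal.rpow_lt_top_of_nonneg (by norm_num) hμQ₁)).ne
  have hN₂fin : N₂ ≠ ∞ :=
    (lt_of_le_of_lt hN₂ (ENNReal.rpow_lt_top_of_nonneg (by norm_num) hμQ₂)).ne
  -- tail lintegrals
  set G₁ : X₁ → ℝ := fun y₁ => (C_Q*ℓ₁)^α₁ / (ρ₁ xQ₁ y₁ ^ α₁ * lam₁ xQ₁ (ρ₁ xQ₁ y₁)) with hG₁def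
  set G₂ : X₂ → ℝ := fun y₂ => (C_Q*ℓ₂)^α₂ / (ρ₂ xQ₂ y₂ ^ α₂ * lam₂ xQ₂ (ρ₂ xQ₂ y₂)) with hG₂def
  set T₁ : ℝ≥0∞ := ∫⁻ y in Uᶜ, ENNReal.ofReal (G₁ y) ∂μ₁ with hT₁def
  set T₂ : ℝ≥0∞ := ∫⁻ y in Vᶜ, ENNReal.ofReal (G₂ y) ∂μ₂ with hT₂def
  have hT₁ : T₁ ≤ ENNReal.ofReal t₁ :=
    my_tail_bound hClam₁ hα₁ hC_Q hC_K ρ₁ μ₁ lam₁ xQ₁ hlam₁pos hlam₁mono hlam₁doub hμ₁lam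
      hUm hℓ₁ hUsub
  have hT₂ : T₂ ≤ ENNReal.ofReal t₂ :=
    my_tail_bound hClam₂ hα₂ hC_Q hC_K ρ₂ μ₂ lam₂ xQ₂ hlam₂pos hlam₂mono hlam₂doub hμ₂lam
      hVm hℓ₂ hVsub
  have hT₁fin : T₁ ≠ ∞ := (lt_of_le_of_lt hT₁ ENNReal.ofReal_lt_top).ne
  have hT₂fin : T₂ ≠ ∞ := (lt_of_le_of_lt hT₂ ENNReal.ofReal_lt_top).ne
  -- measurability for the h-side
  have hm1 : AEMeasurable (fun x => ENNReal.ofReal ‖h₁ x‖) (μ₁.restrict Q₁) :=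
    (hmem₁.aestronglyMeasurable.restrict.norm.aemeasurable).ennreal_ofReal
  have hm2 : AEMeasurable (fun x => ENNReal.ofReal ‖h₂ x‖) (μ₂.restrict Q₂) :=
    (hmem₂.aestronglyMeasurable.restrict.norm.aemeasurable).ennreal_ofReal
  -- the a.e. pointwise bound
  have hae : ∀ᵐ z ∂M, ENNReal.ofReal ‖K z.2 z.1 * h₁ z.2.1 * h₂ z.2.2
        - K (xQ₁, z.2.2) z.1 * h₁ z.2.1 * h₂ z.2.2
        - K (z.2.1, xQ₂) z.1 * h₁ z.2.1 * h₂ z.2.2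
        + K (xQ₁, xQ₂) z.1 * h₁ z.2.1 * h₂ z.2.2‖
      ≤ (ENNReal.ofReal C_H * (ENNReal.ofReal (G₁ z.1.1) * ENNReal.ofReal (G₂ z.1.2)))
          * (ENNReal.ofReal ‖h₁ z.2.1‖ * ENNReal.ofReal ‖h₂ z.2.2‖) := by
    have m1P : ∀ᵐ p ∂P, p.1 ∈ Uᶜ :=
      my_ae_prod_fst (μ₁.restrict Uᶜ) (μ₂.restrict Vᶜ) (ae_restrict_mem hUm.compl)
    have m2P : ∀ᵐ p ∂P, p.2 ∈ Vᶜ :=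
      my_ae_prod_snd (μ₁.restrict Uᶜ) (μ₂.restrict Vᶜ) (ae_restrict_mem hVm.compl)
    have m3ν : ∀ᵐ q ∂ν, q.1 ∈ Q₁ :=
      my_ae_prod_fst (μ₁.restrict Q₁) (μ₂.restrict Q₂) (ae_restrict_mem hQ₁m)
    have m4ν : ∀ᵐ q ∂ν, q.2 ∈ Q₂ :=
      my_ae_prod_snd (μ₁.restrict Q₁) (μ₂.restrict Q₂) (ae_restrict_mem hQ₂m)
    have m1 : ∀ᵐ z ∂M, z.1.1 ∈ Uᶜ := my_ae_prod_fst P ν m1P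
    have m2 : ∀ᵐ z ∂M, z.1.2 ∈ Vᶜ := my_ae_prod_fst P ν m2P
    have m3 : ∀ᵐ z ∂M, z.2.1 ∈ Q₁ := my_ae_prod_snd P ν m3ν
    have m4 : ∀ᵐ z ∂M, z.2.2 ∈ Q₂ := my_ae_prod_snd P ν m4ν
    filter_upwards [m1, m2, m3, m4] with z hz1 hz2' hz3' hz4'
    obtain ⟨⟨y₁, y₂⟩, x₁, x₂⟩ := z
    show ENNReal.ofReal ‖K (x₁, x₂) (y₁, y₂) * h₁ x₁ * h₂ x₂
        - K (xQ₁, x₂) (y₁, y₂) * h₁ x₁ * h₂ x₂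
        - K (x₁, xQ₂) (y₁, y₂) * h₁ x₁ * h₂ x₂
        + K (xQ₁, xQ₂) (y₁, y₂) * h₁ x₁ * h₂ x₂‖
      ≤ (ENNReal.ofReal C_H * (ENNReal.ofReal (G₁ y₁) * ENNReal.ofReal (G₂ y₂)))
          * (ENNReal.ofReal ‖h₁ x₁‖ * ENNReal.ofReal ‖h₂ x₂‖)
    replace hz1 : y₁ ∈ Uᶜ := hz1
    replace hz2' : y₂ ∈ Vᶜ := hz2'
    replace hz3' : x₁ ∈ Q₁ := hz3'
    replace hz4' : x₂ ∈ Q₂ := hz4'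
    have hry₁ : C_K * C_Q * ℓ₁ ≤ ρ₁ xQ₁ y₁ := le_of_not_gt fun hlt => hz1 (hUsub hlt)
    have hry₂ : C_K * C_Q * ℓ₂ ≤ ρ₂ xQ₂ y₂ := le_of_not_gt fun hlt => hz2' (hVsub hlt)
    have hρy₁ : (0:ℝ) < ρ₁ xQ₁ y₁ := lt_of_lt_of_le (by positivity) hry₁
    have hρy₂ : (0:ℝ) < ρ₂ xQ₂ y₂ := lt_of_lt_of_le (by positivity) hry₂
    have hx₁Q : ρ₁ x₁ xQ₁ < C_Q * ℓ₁ := by rw [hρ₁symm]; exact hQ₁sub hz3'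
    have hx₂Q : ρ₂ x₂ xQ₂ < C_Q * ℓ₂ := by rw [hρ₂symm]; exact hQ₂sub hz4'
    have hcond₁ : ρ₁ x₁ xQ₁ ≤ ρ₁ xQ₁ y₁ / C_K := by
      rw [le_div_iff₀ hCK0]; nlinarith
    have hcond₂ : ρ₂ x₂ xQ₂ ≤ ρ₂ xQ₂ y₂ / C_K := by
      rw [le_div_iff₀ hCK0]; nlinarith
    have hKb := hK x₁ x₂ y₁ y₂ hcond₁ hcond₂
    have hd₁ : 0 < ρ₁ xQ₁ y₁ ^ α₁ * lam₁ xQ₁ (ρ₁ xQ₁ y₁) :=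
      mul_pos (Real.rpow_pos_of_pos hρy₁ _) (hlam₁pos _ _ hρy₁)
    have hd₂ : 0 < ρ₂ xQ₂ y₂ ^ α₂ * lam₂ xQ₂ (ρ₂ xQ₂ y₂) :=
      mul_pos (Real.rpow_pos_of_pos hρy₂ _) (hlam₂pos _ _ hρy₂)
    have hg₁ : ρ₁ x₁ xQ₁ ^ α₁ / (ρ₁ xQ₁ y₁ ^ α₁ * lam₁ xQ₁ (ρ₁ xQ₁ y₁)) ≤ G₁ y₁ := by
      simp only [hG₁def]
      exact (div_le_div_iff_of_pos_right hd₁).2 (Real.rpow_le_rpow (hρ₁nn _ _) hx₁Q.le hα₁.le)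
    have hg₂ : ρ₂ x₂ xQ₂ ^ α₂ / (ρ₂ xQ₂ y₂ ^ α₂ * lam₂ xQ₂ (ρ₂ xQ₂ y₂)) ≤ G₂ y₂ := by
      simp only [hG₂def]
      exact (div_le_div_iff_of_pos_right hd₂).2 (Real.rpow_le_rpow (hρ₂nn _ _) hx₂Q.le hα₂.le)
    have hG₁nn : 0 ≤ G₁ y₁ := by
      simp only [hG₁def]
      exact div_nonneg (Real.rpow_nonneg (by positivity) _) hd₁.le
    have hG₂nn : 0 ≤ G₂ y₂ := by
      simp only [hG₂def]
      exact div_nonneg (Real.rpow_nonneg (by positivity) _) hd₂.le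
    have hdiff : ‖K (x₁, x₂) (y₁, y₂) - K (xQ₁, x₂) (y₁, y₂)
        - K (x₁, xQ₂) (y₁, y₂) + K (xQ₁, xQ₂) (y₁, y₂)‖ ≤ C_H * G₁ y₁ * G₂ y₂ := by
      refine hKb.trans ?_
      have h0 : 0 ≤ ρ₂ x₂ xQ₂ ^ α₂ / (ρ₂ xQ₂ y₂ ^ α₂ * lam₂ xQ₂ (ρ₂ xQ₂ y₂)) :=
        div_nonneg (Real.rpow_nonneg (hρ₂nn _ _) _) hd₂.le
      exact mul_le_mul (mul_le_mul_of_nonneg_left hg₁ hC_H) hg₂ h0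
        (mul_nonneg hC_H hG₁nn)
    have hfz : K (x₁, x₂) (y₁, y₂) * h₁ x₁ * h₂ x₂
        - K (xQ₁, x₂) (y₁, y₂) * h₁ x₁ * h₂ x₂
        - K (x₁, xQ₂) (y₁, y₂) * h₁ x₁ * h₂ x₂
        + K (xQ₁, xQ₂) (y₁, y₂) * h₁ x₁ * h₂ x₂
        = (K (x₁, x₂) (y₁, y₂) - K (xQ₁, x₂) (y₁, y₂)
            - K (x₁, xQ₂) (y₁, y₂) + K (xQ₁, xQ₂) (y₁, y₂)) * (h₁ x₁ * h₂ x₂) := by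
      ring
    calc ENNReal.ofReal ‖K (x₁, x₂) (y₁, y₂) * h₁ x₁ * h₂ x₂
          - K (xQ₁, x₂) (y₁, y₂) * h₁ x₁ * h₂ x₂
          - K (x₁, xQ₂) (y₁, y₂) * h₁ x₁ * h₂ x₂
          + K (xQ₁, xQ₂) (y₁, y₂) * h₁ x₁ * h₂ x₂‖
        = ENNReal.ofReal (‖K (x₁, x₂) (y₁, y₂) - K (xQ₁, x₂) (y₁, y₂)
            - K (x₁, xQ₂) (y₁, y₂) + K (xQ₁, xQ₂) (y₁, y₂)‖ * (‖h₁ x₁‖ * ‖h₂ x₂‖)) := by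
          rw [hfz, norm_mul, norm_mul]
      _ ≤ ENNReal.ofReal ((C_H * G₁ y₁ * G₂ y₂) * (‖h₁ x₁‖ * ‖h₂ x₂‖)) := by
          apply ENNReal.ofReal_le_ofReal
          exact mul_le_mul_of_nonneg_right hdiff (by positivity)
      _ = (ENNReal.ofReal C_H * (ENNReal.ofReal (G₁ y₁) * ENNReal.ofReal (G₂ y₂)))
            * (ENNReal.ofReal ‖h₁ x₁‖ * ENNReal.ofReal ‖h₂ x₂‖) := by
          rw [ENNReal.ofReal_mul (by positivity : (0:ℝ) ≤ C_H * G₁ y₁ * G₂ y₂),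
            ENNReal.ofReal_mul (by positivity : (0:ℝ) ≤ C_H * G₁ y₁),
            ENNReal.ofReal_mul hC_H,
            ENNReal.ofReal_mul (norm_nonneg _)]
          ring
  -- the main lintegral bound
  have hlin : ∫⁻ z, ENNReal.ofReal ‖K z.2 z.1 * h₁ z.2.1 * h₂ z.2.2
        - K (xQ₁, z.2.2) z.1 * h₁ z.2.1 * h₂ z.2.2
        - K (z.2.1, xQ₂) z.1 * h₁ z.2.1 * h₂ z.2.2
        + K (xQ₁, xQ₂) z.1 * h₁ z.2.1 * h₂ z.2.2‖ ∂M
      ≤ ENNReal.ofReal C_H * (T₁ * T₂) * (N₁ * N₂) := by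
    have hcfin : ∀ p : X₁ × X₂,
        (ENNReal.ofReal C_H * (ENNReal.ofReal (G₁ p.1) * ENNReal.ofReal (G₂ p.2))) ≠ ∞ :=
      fun p => ENNReal.mul_ne_top ENNReal.ofReal_ne_top
        (ENNReal.mul_ne_top ENNReal.ofReal_ne_top ENNReal.ofReal_ne_top)
    calc ∫⁻ z, ENNReal.ofReal ‖K z.2 z.1 * h₁ z.2.1 * h₂ z.2.2
          - K (xQ₁, z.2.2) z.1 * h₁ z.2.1 * h₂ z.2.2
          - K (z.2.1, xQ₂) z.1 * h₁ z.2.1 * h₂ z.2.2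
          + K (xQ₁, xQ₂) z.1 * h₁ z.2.1 * h₂ z.2.2‖ ∂M
        ≤ ∫⁻ z, (ENNReal.ofReal C_H * (ENNReal.ofReal (G₁ z.1.1) * ENNReal.ofReal (G₂ z.1.2)))
            * (ENNReal.ofReal ‖h₁ z.2.1‖ * ENNReal.ofReal ‖h₂ z.2.2‖) ∂M :=
          lintegral_mono_ae hae
      _ ≤ ∫⁻ p, ∫⁻ q, (ENNReal.ofReal C_H * (ENNReal.ofReal (G₁ p.1) * ENNReal.ofReal (G₂ p.2)))
            * (ENNReal.ofReal ‖h₁ q.1‖ * ENNReal.ofReal ‖h₂ q.2‖) ∂ν ∂P := by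
          rw [hMdef]
          exact my_lintegral_prod_le P ν _
      _ = ∫⁻ p, (ENNReal.ofReal C_H * (ENNReal.ofReal (G₁ p.1) * ENNReal.ofReal (G₂ p.2)))
            * (N₁ * N₂) ∂P := by
          refine lintegral_congr fun p => ?_
          rw [lintegral_const_mul' _ _ (hcfin p)]
          congr 1
          rw [hνdef]
          exact lintegral_prod_mul hm1 hm2
      _ = (∫⁻ p, ENNReal.ofReal C_H
            * (ENNReal.ofReal (G₁ p.1) * ENNReal.ofReal (G₂ p.2)) ∂P) * (N₁ * N₂) :=
          lintegral_mul_const' _ _ (ENNReal.mul_ne_top hN₁fin hN₂fin)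
      _ = (ENNReal.ofReal C_H
            * ∫⁻ p, ENNReal.ofReal (G₁ p.1) * ENNReal.ofReal (G₂ p.2) ∂P) * (N₁ * N₂) := by
          rw [lintegral_const_mul' _ _ ENNReal.ofReal_ne_top]
      _ ≤ (ENNReal.ofReal C_H * (T₁ * T₂)) * (N₁ * N₂) := by
          refine mul_le_mul_left (mul_le_mul_right ?_ _) _
          calc ∫⁻ p, ENNReal.ofReal (G₁ p.1) * ENNReal.ofReal (G₂ p.2) ∂P
              ≤ ∫⁻ y₁, ∫⁻ y₂, ENNReal.ofReal (G₁ y₁) * ENNReal.ofReal (G₂ y₂)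
                  ∂(μ₂.restrict Vᶜ) ∂(μ₁.restrict Uᶜ) := by
                rw [hPdef]
                exact my_lintegral_prod_le _ _ _
            _ = ∫⁻ y₁, ENNReal.ofReal (G₁ y₁) * T₂ ∂(μ₁.restrict Uᶜ) := by
                refine lintegral_congr fun y₁ => ?_
                rw [lintegral_const_mul' _ _ ENNReal.ofReal_ne_top]
            _ = T₁ * T₂ := lintegral_mul_const' _ _ hT₂fin
  -- final assembly
  have e0 : (∫ y₁ in Uᶜ, ∫ y₂ in Vᶜ, ∫ x₁ in Q₁, ∫ x₂ in Q₂,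
        K (x₁, x₂) (y₁, y₂) * h₁ x₁ * h₂ x₂ ∂μ₂ ∂μ₁ ∂μ₂ ∂μ₁)
      = ∫ z, K z.2 z.1 * h₁ z.2.1 * h₂ z.2.2 ∂M :=
    (quad (fun z => K z.2 z.1 * h₁ z.2.1 * h₂ z.2.2) hI1).symm
  have Efin : ENNReal.ofReal C_H * (ENNReal.ofReal t₁ * ENNReal.ofReal t₂)
      * ((μ₁ Q₁) ^ ((1:ℝ)/2) * (μ₂ Q₂) ^ ((1:ℝ)/2)) ≠ ∞ :=
    ENNReal.mul_ne_top
      (ENNReal.mul_ne_top ENNReal.ofReal_ne_top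
        (ENNReal.mul_ne_top ENNReal.ofReal_ne_top ENNReal.ofReal_ne_top))
      (ENNReal.mul_ne_top (ENNReal.rpow_lt_top_of_nonneg (by norm_num) hμQ₁).ne
        (ENNReal.rpow_lt_top_of_nonneg (by norm_num) hμQ₂).ne)
  have hm₁nn : 0 ≤ (μ₁ Q₁).toReal ^ ((1:ℝ)/2) := Real.rpow_nonneg ENNReal.toReal_nonneg _
  have hm₂nn : 0 ≤ (μ₂ Q₂).toReal ^ ((1:ℝ)/2) := Real.rpow_nonneg ENNReal.toReal_nonneg _
  calc ‖∫ y₁ in Uᶜ, ∫ y₂ in Vᶜ, ∫ x₁ in Q₁, ∫ x₂ in Q₂,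
        K (x₁, x₂) (y₁, y₂) * h₁ x₁ * h₂ x₂ ∂μ₂ ∂μ₁ ∂μ₂ ∂μ₁‖
      = ‖∫ z, (K z.2 z.1 * h₁ z.2.1 * h₂ z.2.2
          - K (xQ₁, z.2.2) z.1 * h₁ z.2.1 * h₂ z.2.2
          - K (z.2.1, xQ₂) z.1 * h₁ z.2.1 * h₂ z.2.2
          + K (xQ₁, xQ₂) z.1 * h₁ z.2.1 * h₂ z.2.2) ∂M‖ := by
        rw [e0, hfour]
    _ ≤ (∫⁻ z, ENNReal.ofReal ‖K z.2 z.1 * h₁ z.2.1 * h₂ z.2.2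
          - K (xQ₁, z.2.2) z.1 * h₁ z.2.1 * h₂ z.2.2
          - K (z.2.1, xQ₂) z.1 * h₁ z.2.1 * h₂ z.2.2
          + K (xQ₁, xQ₂) z.1 * h₁ z.2.1 * h₂ z.2.2‖ ∂M).toReal :=
        norm_integral_le_lintegral_norm _
    _ ≤ (ENNReal.ofReal C_H * (ENNReal.ofReal t₁ * ENNReal.ofReal t₂)
          * ((μ₁ Q₁) ^ ((1:ℝ)/2) * (μ₂ Q₂) ^ ((1:ℝ)/2))).toReal := by
        apply ENNReal.toReal_mono Efin
        refine hlin.trans ?_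
        gcongr
    _ = C_H * (t₁ * t₂) * ((μ₁ Q₁).toReal ^ ((1:ℝ)/2) * (μ₂ Q₂).toReal ^ ((1:ℝ)/2)) := by
        rw [ENNReal.toReal_mul, ENNReal.toReal_mul, ENNReal.toReal_mul, ENNReal.toReal_mul,
          ENNReal.toReal_ofReal hC_H, ENNReal.toReal_ofReal ht₁0.le,
          ENNReal.toReal_ofReal ht₂0.le, ← ENNReal.toReal_rpow, ← ENNReal.toReal_rpow]
    _ ≤ (C_H + 1) * t₁ * t₂ * (μ₁ Q₁).toReal ^ ((1:ℝ)/2) * (μ₂ Q₂).toReal ^ ((1:ℝ)/2) := by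
        nlinarith [mul_nonneg (mul_nonneg ht₁0.le ht₂0.le) (mul_nonneg hm₁nn hm₂nn),
          mul_nonneg hm₁nn hm₂nn, mul_nonneg ht₁0.le ht₂0.le]
end
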